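/- Let (F,Ω,⋆) be a stratified fusion system on a group S, let Γ be an F-closed set of subgroups of S such that F is Γ-inductive, and let V ∈ Γ. Then there exists an F-conjugate U of V such that both U and Soc(N_F(U)) are fully normalized in (F,Ω,⋆), where Soc(N_F(U)) denotes the largest subgroup of N_S(U) that is normal in the fusion system N_F(U). -/

import Mathlib

/-- `F f X Y` asserts that the function `f : S → S` (through its restriction to `X`)
is an `F`-homomorphism from the subgroup `X` to the subgroup `Y`. -/
abbrev HomPred (S : Type*) [Group S] := (S → S) → Subgroup S → Subgroup S → Prop

/-- A fusion system, with hom-sets given by `F · X Y`, on the subgroup `T`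
of the ambient group `S`.  Morphisms are represented by functions `S → S`,
two functions agreeing on `X` representing the same morphism `X → Y`. -/
structure IsFusionSystem {S : Type*} [Group S] (T : Subgroup S) (F : HomPred S) : Prop where
  le_base : ∀ f X Y, F f X Y → X ≤ T ∧ Y ≤ T
  mapsTo : ∀ f X Y, F f X Y → Set.MapsTo f (X : Set S) (Y : Set S)
  injOn : ∀ f X Y, F f X Y → Set.InjOn f (X : Set S)
  map_mul' : ∀ f X Y, F f X Y → ∀ x ∈ X, ∀ y ∈ X, f (x * y) = f x * f y
  of_eqOn : ∀ f g X Y, F f X Y → Set.EqOn g f (X : Set S) → F g X Y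
  conj_mem : ∀ g ∈ T, ∀ X Y : Subgroup S, X ≤ T → Y ≤ T →
    (∀ x ∈ X, g⁻¹ * x * g ∈ Y) → F (fun x => g⁻¹ * x * g) X Y
  comp_mem : ∀ f g X Y Z, F f X Y → F g Y Z → F (g ∘ f) X Z
  restrict_mem : ∀ f X Y X₀ Y₀, F f X Y → X₀ ≤ X → Y₀ ≤ Y →
    Set.MapsTo f (X₀ : Set S) (Y₀ : Set S) → F f X₀ Y₀
  corestrict_mem : ∀ f X Y, F f X Y → F f X (Subgroup.closure (f '' (X : Set S)))
  inv_mem : ∀ f X Y, F f X Y →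
    ∃ g, F g (Subgroup.closure (f '' (X : Set S))) X ∧ ∀ x ∈ X, g (f x) = x

variable {S : Type*} [Group S]

/-- `f` is an `F`-isomorphism from `X` onto `Y`. -/
def IsFIso (F : HomPred S) (f : S → S) (X Y : Subgroup S) : Prop :=
  F f X Y ∧ f '' (X : Set S) = (Y : Set S)

/-- `X^F`, the set of `F`-conjugates of `X`. -/
def FConj (F : HomPred S) (X : Subgroup S) : Set (Subgroup S) :=
  {Y | ∃ f, IsFIso F f X Y}

/-- `N` is normal in the fusion system `F` on the base subgroup `T`:
`N` is normal in `T` and every `F`-isomorphism `X → Y` extends to an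
`F`-isomorphism `XN → YN` mapping `N` onto `N`. -/
def NormalInF (T : Subgroup S) (F : HomPred S) (N : Subgroup S) : Prop :=
  N ≤ T ∧ (∀ g ∈ T, ∀ n ∈ N, g⁻¹ * n * g ∈ N) ∧
    ∀ f X Y, IsFIso F f X Y →
      ∃ g, IsFIso F g (X ⊔ N) (Y ⊔ N) ∧ Set.EqOn g f (X : Set S) ∧
        g '' (N : Set S) = (N : Set S)

/-- The supremum of the lengths of strictly increasing chains in `Ω`
terminating in `A`. -/
noncomputable def dimEnd (Ω : Set (Subgroup S)) (A : Subgroup S) : ℕ :=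
  sSup {n | ∃ c : Fin (n + 1) → Subgroup S,
    StrictMono c ∧ (∀ i, c i ∈ Ω) ∧ c (Fin.last n) = A}

/-- The supremum of the lengths of strictly increasing chains in `Ω`. -/
noncomputable def dimOmega (Ω : Set (Subgroup S)) : ℕ :=
  sSup {n | ∃ c : Fin (n + 1) → Subgroup S, StrictMono c ∧ ∀ i, c i ∈ Ω}

/-- `(Ω, star)` is a stratification on the fusion system `F` on base `T`. -/
structure IsStratification (T : Subgroup S) (F : HomPred S)
    (Ω : Set (Subgroup S)) (star : Subgroup S → Subgroup S) : Prop where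
  omega_le : ∀ A ∈ Ω, A ≤ T
  star_mem : ∀ X : Subgroup S, X ≤ T → star X ∈ Ω
  star_fix : ∀ A ∈ Ω, star A = A
  star_mono : ∀ X Y : Subgroup S, X ≤ T → Y ≤ T → X ≤ Y → star X ≤ star Y
  finDim : ∃ N : ℕ, ∀ n : ℕ,
    (∃ c : Fin (n + 1) → Subgroup S, StrictMono c ∧ ∀ i, c i ∈ Ω) → n ≤ N
  conj_invariant : ∀ A ∈ Ω, ∀ f Y, IsFIso F f A Y → Y ∈ Ω
  le_star : ∀ X : Subgroup S, X ≤ T → X ≤ star X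
  extend_star : ∀ f X Y, IsFIso F f X Y →
    ∃ g, IsFIso F g (star X) (star Y) ∧ Set.EqOn g f (X : Set S)

/-- `dim_Ω(X)`, the supremum of the lengths of strictly increasing chains
in `Ω` terminating in `X⋆`. -/
noncomputable def dimStar (Ω : Set (Subgroup S)) (star : Subgroup S → Subgroup S)
    (X : Subgroup S) : ℕ :=
  dimEnd Ω (star X)

/-- `V` is fully normalized in the stratified fusion system `(F, Ω, star)` on base `T`. -/
def FullyNormalizedIn (T : Subgroup S) (F : HomPred S) (Ω : Set (Subgroup S))
    (star : Subgroup S → Subgroup S) (V : Subgroup S) : Prop :=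
  ∀ U ∈ FConj F V, dimStar Ω star (Subgroup.normalizer (U : Set S) ⊓ T) ≤ dimStar Ω star (Subgroup.normalizer (V : Set S) ⊓ T)

/-- `V` is fully centralized in the stratified fusion system `(F, Ω, star)` on base `T`. -/
def FullyCentralizedIn (T : Subgroup S) (F : HomPred S) (Ω : Set (Subgroup S))
    (star : Subgroup S → Subgroup S) (V : Subgroup S) : Prop :=
  ∀ U ∈ FConj F V,
    dimStar Ω star ((Subgroup.centralizer (U : Set S) ⊓ T) ⊔ U) ≤
      dimStar Ω star ((Subgroup.centralizer (V : Set S) ⊓ T) ⊔ V)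

/-- `Γ` is an `F`-closed set of subgroups. -/
def FClosed (F : HomPred S) (Γ : Set (Subgroup S)) : Prop :=
  Γ.Nonempty ∧ (∀ X ∈ Γ, ∀ Y ∈ FConj F X, Y ∈ Γ) ∧
    ∀ X ∈ Γ, ∀ Y : Subgroup S, X ≤ Y → Y ∈ Γ

/-- `Y` is normalizer-inductive in the fusion system `F` on base `T`. -/
def NormalizerInductive (T : Subgroup S) (F : HomPred S) (Y : Subgroup S) : Prop :=
  ∀ X ∈ FConj F Y, ∃ φ, F φ (Subgroup.normalizer (X : Set S) ⊓ T) (Subgroup.normalizer (Y : Set S) ⊓ T) ∧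
    φ '' (X : Set S) = (Y : Set S)

/-- `Y` is centralizer-inductive in the fusion system `F` on base `T`. -/
def CentralizerInductive (T : Subgroup S) (F : HomPred S) (Y : Subgroup S) : Prop :=
  ∀ X ∈ FConj F Y, ∃ ψ,
    F ψ ((Subgroup.centralizer (X : Set S) ⊓ T) ⊔ X)
        ((Subgroup.centralizer (Y : Set S) ⊓ T) ⊔ Y) ∧
    ψ '' (X : Set S) = (Y : Set S)

/-- `F` is `Γ`-inductive. -/
def GammaInductive (T : Subgroup S) (F : HomPred S) (Γ : Set (Subgroup S)) : Prop :=
  ∀ X ∈ Γ, ∃ Y ∈ FConj F X, NormalizerInductive T F Y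

/-- `F` is inductive (i.e. `Sub(T)`-inductive). -/
def InductiveFS (T : Subgroup S) (F : HomPred S) : Prop :=
  ∀ X : Subgroup S, X ≤ T → ∃ Y ∈ FConj F X, NormalizerInductive T F Y

/-- `⟨Φ⟩_T`: the smallest fusion system on `T` all of whose homomorphisms are
`Famb`-homomorphisms and whose hom-sets contain `Φ`. -/
def GenFS (T : Subgroup S) (Famb : HomPred S) (Φ : HomPred S) : HomPred S :=
  fun f X Y => ∀ E : HomPred S, IsFusionSystem T E →
    (∀ g A B, E g A B → Famb g A B) → (∀ g A B, Φ g A B → E g A B) → E f X Y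

/-- The generating set `Φ` for `N_F(V)`: `F`-isomorphisms between subgroups of
`N_S(V)` extending to `F`-isomorphisms `XV → YV` restricting to an automorphism of `V`. -/
def NPhi (F : HomPred S) (V : Subgroup S) : HomPred S :=
  fun f X Y => X ≤ Subgroup.normalizer (V : Set S) ∧ Y ≤ Subgroup.normalizer (V : Set S) ∧ IsFIso F f X Y ∧
    ∃ g, IsFIso F g (X ⊔ V) (Y ⊔ V) ∧ Set.EqOn g f (X : Set S) ∧
      g '' (V : Set S) = (V : Set S)

/-- The fusion system `N_F(V)` on `N_S(V)`. -/
def NFus (F : HomPred S) (V : Subgroup S) : HomPred S :=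
  GenFS (Subgroup.normalizer (V : Set S)) F (NPhi F V)

/-- The generating set `Ψ` for `C_F(V)`: `F`-isomorphisms between subgroups of
`C_S(V)` extending to `F`-isomorphisms `XV → YV` restricting to the identity on `V`. -/
def CPsi (F : HomPred S) (V : Subgroup S) : HomPred S :=
  fun f X Y => X ≤ Subgroup.centralizer (V : Set S) ∧
    Y ≤ Subgroup.centralizer (V : Set S) ∧ IsFIso F f X Y ∧
    ∃ g, IsFIso F g (X ⊔ V) (Y ⊔ V) ∧ Set.EqOn g f (X : Set S) ∧ ∀ v ∈ V, g v = v

/-- The fusion system `C_F(V)` on `C_S(V)`. -/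
def CFus (F : HomPred S) (V : Subgroup S) : HomPred S :=
  GenFS (Subgroup.centralizer (V : Set S)) F (CPsi F V)

/-- `X ↦ X• = (VX)⋆ ⊓ N_S(V)`. -/
def bulletStar (star : Subgroup S → Subgroup S) (V : Subgroup S) :
    Subgroup S → Subgroup S :=
  fun X => star (V ⊔ X) ⊓ Subgroup.normalizer (V : Set S)

/-- `N_Ω(V) = {X• : X ≤ N_S(V)}`. -/
def bulletOmega (star : Subgroup S → Subgroup S) (V : Subgroup S) : Set (Subgroup S) :=
  {A | ∃ X : Subgroup S, X ≤ Subgroup.normalizer (V : Set S) ∧ A = bulletStar star V X}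

/-- `A ↦ A° = (VA)⋆ ⊓ C_S(V)`. -/
def circStar (star : Subgroup S → Subgroup S) (V : Subgroup S) :
    Subgroup S → Subgroup S :=
  fun A => star (V ⊔ A) ⊓ Subgroup.centralizer (V : Set S)

/-- `C_Ω(V) = {A° : A ≤ C_S(V)}`. -/
def circOmega (star : Subgroup S → Subgroup S) (V : Subgroup S) : Set (Subgroup S) :=
  {A | ∃ X : Subgroup S, X ≤ Subgroup.centralizer (V : Set S) ∧ A = circStar star V X}

/-- `T` is strongly closed in `F`. -/
def StronglyClosedF (F : HomPred S) (T : Subgroup S) : Prop :=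
  ∀ X : Subgroup S, X ≤ T → ∀ Y ∈ FConj F X, Y ≤ T

namespace StratProof

open Set Subgroup

variable {S : Type*} [Group S] {F : HomPred S}

/-- Image of a subgroup under a (local) morphism, as a subgroup. -/
def fimg (f : S → S) (A : Subgroup S) : Subgroup S := Subgroup.closure (f '' (A : Set S))

section MulOn

variable {f : S → S} {D A B T : Subgroup S}

theorem map_one_of_mul (hmul : ∀ x ∈ D, ∀ y ∈ D, f (x * y) = f x * f y) : f 1 = 1 := by
  have h := hmul 1 D.one_mem 1 D.one_mem
  rw [mul_one] at h
  exact left_eq_mul.mp h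

theorem map_inv_of_mul (hmul : ∀ x ∈ D, ∀ y ∈ D, f (x * y) = f x * f y)
    {x : S} (hx : x ∈ D) : f x⁻¹ = (f x)⁻¹ := by
  have h := hmul x⁻¹ (inv_mem hx) x hx
  rw [inv_mul_cancel, map_one_of_mul hmul] at h
  exact eq_inv_of_mul_eq_one_left h.symm

theorem map_conj_of_mul (hmul : ∀ x ∈ D, ∀ y ∈ D, f (x * y) = f x * f y)
    {x y : S} (hx : x ∈ D) (hy : y ∈ D) :
    f (x⁻¹ * y * x) = (f x)⁻¹ * f y * f x := by
  rw [hmul (x⁻¹ * y) (mul_mem (inv_mem hx) hy) x hx, hmul x⁻¹ (inv_mem hx) y hy,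
    map_inv_of_mul hmul hx]

theorem map_conj_of_mul' (hmul : ∀ x ∈ D, ∀ y ∈ D, f (x * y) = f x * f y)
    {x y : S} (hx : x ∈ D) (hy : y ∈ D) :
    f (x * y * x⁻¹) = f x * f y * (f x)⁻¹ := by
  rw [hmul (x * y) (mul_mem hx hy) x⁻¹ (inv_mem hx), hmul x hx y hy,
    map_inv_of_mul hmul hx]

theorem fimg_coe (hmul : ∀ x ∈ D, ∀ y ∈ D, f (x * y) = f x * f y) (hA : A ≤ D) :
    ((fimg f A : Subgroup S) : Set S) = f '' (A : Set S) := by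
  have hsub : Subgroup S := ⊥
  let H : Subgroup S :=
    { carrier := f '' (A : Set S)
      one_mem' := ⟨1, A.one_mem, map_one_of_mul hmul⟩
      mul_mem' := by
        rintro _ _ ⟨a, ha, rfl⟩ ⟨b, hb, rfl⟩
        exact ⟨a * b, mul_mem ha hb, hmul a (hA ha) b (hA hb)⟩
      inv_mem' := by
        rintro _ ⟨a, ha, rfl⟩
        exact ⟨a⁻¹, inv_mem ha, map_inv_of_mul hmul (hA ha)⟩ }
  have : fimg f A = H := by
    apply le_antisymm
    · exact Subgroup.closure_le H |>.mpr (by intro x hx; exact hx)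
    · intro x hx; exact Subgroup.subset_closure hx
  rw [this]; rfl

theorem mem_fimg_of (hx : x ∈ A) : f x ∈ fimg f A :=
  Subgroup.subset_closure ⟨x, hx, rfl⟩

theorem fimg_mono (h : A ≤ B) : fimg f A ≤ fimg f B :=
  Subgroup.closure_mono (Set.image_mono (f := f) h)

theorem fimg_le_iff : fimg f A ≤ T ↔ ∀ a ∈ A, f a ∈ T := by
  rw [fimg, Subgroup.closure_le]
  constructor
  · intro h a ha; exact h ⟨a, ha, rfl⟩
  · rintro h _ ⟨a, ha, rfl⟩; exact h a ha

theorem forall_sup_map_mem (hmul : ∀ x ∈ D, ∀ y ∈ D, f (x * y) = f x * f y)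
    (hA : A ≤ D) (hB : B ≤ D) (h1 : ∀ a ∈ A, f a ∈ T) (h2 : ∀ b ∈ B, f b ∈ T) :
    ∀ x ∈ A ⊔ B, f x ∈ T := by
  let P : Subgroup S :=
    { carrier := {x | x ∈ D ∧ f x ∈ T}
      one_mem' := ⟨D.one_mem, by rw [map_one_of_mul hmul]; exact T.one_mem⟩
      mul_mem' := by
        rintro x y ⟨hxD, hxT⟩ ⟨hyD, hyT⟩
        exact ⟨mul_mem hxD hyD, by rw [hmul x hxD y hyD]; exact mul_mem hxT hyT⟩
      inv_mem' := by
        rintro x ⟨hxD, hxT⟩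
        exact ⟨inv_mem hxD, by rw [map_inv_of_mul hmul hxD]; exact inv_mem hxT⟩ }
  have hP : A ⊔ B ≤ P := sup_le (fun a ha => ⟨hA ha, h1 a ha⟩) (fun b hb => ⟨hB hb, h2 b hb⟩)
  intro x hx
  exact (hP hx).2

theorem sup_le_D (hA : A ≤ D) (hB : B ≤ D) : A ⊔ B ≤ D := sup_le hA hB

theorem mapsTo_sup (hmul : ∀ x ∈ D, ∀ y ∈ D, f (x * y) = f x * f y)
    (hA : A ≤ D) (hB : B ≤ D) (h1 : Set.MapsTo f (A : Set S) (T : Set S))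
    (h2 : Set.MapsTo f (B : Set S) (T : Set S)) :
    Set.MapsTo f ((A ⊔ B : Subgroup S) : Set S) (T : Set S) :=
  fun x hx => forall_sup_map_mem hmul hA hB h1 h2 x hx

theorem fimg_sup (hmul : ∀ x ∈ D, ∀ y ∈ D, f (x * y) = f x * f y)
    (hA : A ≤ D) (hB : B ≤ D) : fimg f (A ⊔ B) = fimg f A ⊔ fimg f B := by
  apply le_antisymm
  · rw [fimg, Subgroup.closure_le]
    rintro _ ⟨x, hx, rfl⟩
    exact forall_sup_map_mem hmul hA hB
      (fun a ha => (le_sup_left : fimg f A ≤ fimg f A ⊔ fimg f B) (mem_fimg_of ha))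
      (fun b hb => (le_sup_right : fimg f B ≤ fimg f A ⊔ fimg f B) (mem_fimg_of hb)) x hx
  · exact sup_le (fimg_mono le_sup_left) (fimg_mono le_sup_right)

theorem fimg_eqOn {g : S → S} (h : Set.EqOn g f (A : Set S)) : fimg g A = fimg f A := by
  unfold fimg
  congr 1
  exact Set.image_congr h

end MulOn

section Normalizer

variable {H : Subgroup S} {g x : S}

theorem conj_mem_of_normalizer (hg : g ∈ (Subgroup.normalizer (H : Set S))) (hx : x ∈ H) :
    g⁻¹ * x * g ∈ H := by
  have h := (Subgroup.mem_normalizer_iff.mp (inv_mem hg) x).mp hx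
  simpa using h

theorem mem_of_conj_mem_normalizer (hg : g ∈ (Subgroup.normalizer (H : Set S))) (h : g⁻¹ * x * g ∈ H) :
    x ∈ H := by
  have h2 := (Subgroup.mem_normalizer_iff.mp hg (g⁻¹ * x * g)).mp h
  have : g * (g⁻¹ * x * g) * g⁻¹ = x := by group
  rwa [this] at h2

theorem conj_image_normalizer (hg : g ∈ (Subgroup.normalizer (H : Set S))) :
    (fun x => g⁻¹ * x * g) '' (H : Set S) = (H : Set S) := by
  ext y
  constructor
  · rintro ⟨x, hx, rfl⟩; exact conj_mem_of_normalizer hg hx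
  · intro hy
    refine ⟨g * y * g⁻¹, ?_, by group⟩
    exact (Subgroup.mem_normalizer_iff.mp hg y).mp hy

end Normalizer



section FLevel

variable {S : Type*} [Group S] {F : HomPred S}
variable (hF : IsFusionSystem (⊤ : Subgroup S) F)
variable {f g : S → S} {X Y Z A B D D' : Subgroup S}

include hF

theorem hmul_of (hf : F f X Y) : ∀ x ∈ X, ∀ y ∈ X, f (x * y) = f x * f y :=
  hF.map_mul' f X Y hf

theorem hom_restrict (hf : F f X Y) (hA : A ≤ X) : F f A Y :=
  hF.restrict_mem f X Y A Y hf hA le_rfl (fun x hx => hF.mapsTo f X Y hf (hA hx))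

theorem hom_fimg (hf : F f X Y) (hA : A ≤ X) : F f A (fimg f A) :=
  hF.corestrict_mem f A Y (hom_restrict hF hf hA)

theorem fimg_coeF (hf : F f X Y) (hA : A ≤ X) :
    ((fimg f A : Subgroup S) : Set S) = f '' (A : Set S) :=
  fimg_coe (hmul_of hF hf) hA

theorem fimg_le (hf : F f X Y) (hA : A ≤ X) : fimg f A ≤ Y :=
  fimg_le_iff.mpr (fun a ha => hF.mapsTo f X Y hf (hA ha))

theorem iso_fimg (hf : F f X Y) (hA : A ≤ X) : IsFIso F f A (fimg f A) :=
  ⟨hom_fimg hF hf hA, (fimg_coeF hF hf hA).symm⟩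

theorem iso_inv (h : IsFIso F f X Y) :
    ∃ g, IsFIso F g Y X ∧ (∀ x ∈ X, g (f x) = x) ∧ ∀ y ∈ (Y : Set S), f (g y) = y := by
  obtain ⟨g, hg, hgf⟩ := hF.inv_mem f X Y h.1
  have hYc : Subgroup.closure (f '' (X : Set S)) = Y := by
    rw [h.2, Subgroup.closure_eq]
  rw [hYc] at hg
  have himg : g '' (Y : Set S) = (X : Set S) := by
    apply Set.Subset.antisymm
    · rintro _ ⟨y, hy, rfl⟩; exact hF.mapsTo g Y X hg hy
    · intro x hx
      exact ⟨f x, h.2 ▸ Set.mem_image_of_mem f hx, hgf x hx⟩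
  refine ⟨g, ⟨hg, himg⟩, hgf, ?_⟩
  intro y hy
  rw [← h.2] at hy
  obtain ⟨x, hx, rfl⟩ := hy
  rw [hgf x hx]

theorem iso_comp (h1 : IsFIso F f X Y) (h2 : IsFIso F g Y Z) : IsFIso F (g ∘ f) X Z :=
  ⟨hF.comp_mem f g X Y Z h1.1 h2.1, by
    rw [Set.image_comp, h1.2, h2.2]⟩

theorem iso_id (X : Subgroup S) : IsFIso F id X X := by
  have h1 : F (fun x => (1 : S)⁻¹ * x * 1) X X :=
    hF.conj_mem 1 (Subgroup.mem_top 1) X X le_top le_top (fun x hx => by simpa using hx)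
  have h2 : F id X X := hF.of_eqOn _ id X X h1 (fun x _ => by simp)
  exact ⟨h2, Set.image_id _⟩

theorem fconj_refl (X : Subgroup S) : X ∈ FConj F X := ⟨id, iso_id hF X⟩

theorem fconj_symm (h : Y ∈ FConj F X) : X ∈ FConj F Y := by
  obtain ⟨f, hf⟩ := h
  obtain ⟨g, hg, _, _⟩ := iso_inv hF hf
  exact ⟨g, hg⟩

theorem fconj_trans (h1 : Y ∈ FConj F X) (h2 : Z ∈ FConj F Y) : Z ∈ FConj F X := by
  obtain ⟨f, hf⟩ := h1; obtain ⟨g, hg⟩ := h2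
  exact ⟨g ∘ f, iso_comp hF hf hg⟩

theorem iso_eqOn (h : IsFIso F f X Y) (he : Set.EqOn g f (X : Set S)) : IsFIso F g X Y :=
  ⟨hF.of_eqOn f g X Y h.1 he, by rw [Set.image_congr he, h.2]⟩

theorem normalizer_transport (hf : F f D D') (hA : A ≤ D) {x : S} (hx : x ∈ D)
    (hn : x ∈ (Subgroup.normalizer (A : Set S))) : f x ∈ (Subgroup.normalizer ((fimg f A : Subgroup S) : Set S)) := by
  have hmul := hmul_of hF hf
  have hco : ((fimg f A : Subgroup S) : Set S) = f '' (A : Set S) := fimg_coeF hF hf hA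
  have hmem : ∀ b, b ∈ fimg f A ↔ b ∈ f '' (A : Set S) := fun b => by
    rw [← SetLike.mem_coe, hco]
  rw [Subgroup.mem_normalizer_iff]
  intro b
  rw [hmem b, hmem (f x * b * (f x)⁻¹)]
  constructor
  · rintro ⟨a, ha, rfl⟩
    refine ⟨x * a * x⁻¹, (Subgroup.mem_normalizer_iff.mp hn a).mp ha, ?_⟩
    exact map_conj_of_mul' hmul hx (hA ha)
  · rintro ⟨a, ha, hab⟩
    refine ⟨x⁻¹ * a * x, conj_mem_of_normalizer hn ha, ?_⟩
    rw [map_conj_of_mul hmul hx (hA ha), hab]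
    group

end FLevel

section Dim

variable {S : Type*} [Group S] {F : HomPred S} {Ω : Set (Subgroup S)}
  {star : Subgroup S → Subgroup S} {A B X Y : Subgroup S}

/-- The set of chain lengths ending at `A`. -/
def chainSet (Ω : Set (Subgroup S)) (A : Subgroup S) : Set ℕ :=
  {n | ∃ c : Fin (n + 1) → Subgroup S,
    StrictMono c ∧ (∀ i, c i ∈ Ω) ∧ c (Fin.last n) = A}

theorem dimEnd_def : dimEnd Ω A = sSup (chainSet Ω A) := rfl

theorem chainSet_zero (hA : A ∈ Ω) : 0 ∈ chainSet Ω A := by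
  refine ⟨fun _ => A, ?_, fun _ => hA, rfl⟩
  intro i j hij
  exfalso
  have h1 : (i : ℕ) < (j : ℕ) := hij
  have h2 := j.isLt
  omega

theorem chainSet_succ (hAB : A < B) (hB : B ∈ Ω) {n : ℕ} (h : n ∈ chainSet Ω A) :
    n + 1 ∈ chainSet Ω B := by
  obtain ⟨c, hmono, hmem, hlast⟩ := h
  refine ⟨fun i => if h : (i : ℕ) < n + 1 then c ⟨i, h⟩ else B, ?_, ?_, ?_⟩
  · intro i j hij
    have hij' : (i : ℕ) < (j : ℕ) := hij
    by_cases hi : (i : ℕ) < n + 1 <;> by_cases hj : (j : ℕ) < n + 1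
    · simp only [dif_pos hi, dif_pos hj]
      exact hmono (show (⟨(i : ℕ), hi⟩ : Fin (n + 1)) < ⟨(j : ℕ), hj⟩ from hij')
    · simp only [dif_pos hi, dif_neg hj]
      calc c ⟨(i : ℕ), hi⟩ ≤ c (Fin.last n) := hmono.monotone (Fin.le_last _)
        _ = A := hlast
        _ < B := hAB
    · omega
    · exfalso
      have : (j : ℕ) < n + 2 := j.isLt
      omega
  · intro i
    by_cases hi : (i : ℕ) < n + 1
    · simp only [dif_pos hi]; exact hmem _
    · simp only [dif_neg hi]; exact hB
  · have : ¬ ((Fin.last (n + 1) : ℕ) < n + 1) := by simp [Fin.last]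
    simp only [dif_neg this]

variable (hΩ : IsStratification ⊤ F Ω star)

include hΩ

theorem chainSet_bdd : BddAbove (chainSet Ω A) := by
  obtain ⟨N, hN⟩ := hΩ.finDim
  exact ⟨N, fun n hn => by
    obtain ⟨c, hc, hΩc, _⟩ := hn
    exact hN n ⟨c, hc, hΩc⟩⟩

theorem le_dimEnd {n : ℕ} (h : n ∈ chainSet Ω A) : n ≤ dimEnd Ω A :=
  le_csSup (chainSet_bdd hΩ) h

theorem dimEnd_mem (hA : A ∈ Ω) : dimEnd Ω A ∈ chainSet Ω A :=
  Nat.sSup_mem ⟨0, chainSet_zero hA⟩ (chainSet_bdd hΩ)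

theorem dimEnd_lt_of_lt (hA : A ∈ Ω) (hB : B ∈ Ω) (hAB : A < B) :
    dimEnd Ω A < dimEnd Ω B := by
  have h2 := chainSet_succ hAB hB (dimEnd_mem hΩ hA)
  exact lt_of_lt_of_le (Nat.lt_succ_self _) (le_dimEnd hΩ h2)

theorem dimEnd_mono (hA : A ∈ Ω) (hB : B ∈ Ω) (hAB : A ≤ B) :
    dimEnd Ω A ≤ dimEnd Ω B := by
  rcases lt_or_eq_of_le hAB with h | h
  · exact le_of_lt (dimEnd_lt_of_lt hΩ hA hB h)
  · rw [h]

theorem eq_of_le_of_dimEnd_le (hA : A ∈ Ω) (hB : B ∈ Ω) (hAB : A ≤ B)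
    (h : dimEnd Ω B ≤ dimEnd Ω A) : A = B := by
  rcases lt_or_eq_of_le hAB with h' | h'
  · exact absurd (dimEnd_lt_of_lt hΩ hA hB h') (not_lt.mpr h)
  · exact h'

theorem star_mem' (X : Subgroup S) : star X ∈ Ω := hΩ.star_mem X le_top

theorem le_star' (X : Subgroup S) : X ≤ star X := hΩ.le_star X le_top

theorem star_mono' (h : X ≤ Y) : star X ≤ star Y := hΩ.star_mono X Y le_top le_top h

theorem star_min (hA : A ∈ Ω) (hX : X ≤ A) : star X ≤ A := by
  have h := hΩ.star_mono X A le_top le_top hX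
  rwa [hΩ.star_fix A hA] at h

theorem star_star (X : Subgroup S) : star (star X) = star X :=
  hΩ.star_fix _ (star_mem' hΩ X)

theorem dimStar_mono (h : X ≤ Y) : dimStar Ω star X ≤ dimStar Ω star Y :=
  dimEnd_mono hΩ (star_mem' hΩ X) (star_mem' hΩ Y) (star_mono' hΩ h)

variable (hF : IsFusionSystem (⊤ : Subgroup S) F)

include hF

theorem dimEnd_le_of_iso {ψ : S → S} {D D' : Subgroup S} (h : IsFIso F ψ D D')
    (hD : D ∈ Ω) (hD' : D' ∈ Ω) : dimEnd Ω D ≤ dimEnd Ω D' := by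
  apply csSup_le ⟨0, chainSet_zero hD⟩
  rintro n ⟨c, hmono, hmem, hlast⟩
  have hle : ∀ i, c i ≤ D := fun i => hlast ▸ hmono.monotone (Fin.le_last i)
  refine le_dimEnd hΩ ⟨fun i => fimg ψ (c i), ?_, ?_, ?_⟩
  · intro i j hij
    refine lt_of_le_of_ne (fimg_mono (hmono hij).le) (fun heq => ?_)
    have hcoe : ∀ k, ((fimg ψ (c k) : Subgroup S) : Set S) = ψ '' (c k : Set S) :=
      fun k => fimg_coeF hF h.1 (hle k)
    have heq' : fimg ψ (c i) = fimg ψ (c j) := heq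
    have hset : ψ '' ((c i : Subgroup S) : Set S) = ψ '' (c j : Set S) := by
      rw [← hcoe i, ← hcoe j, heq']
    have : c j ≤ c i := by
      intro x hx
      have : ψ x ∈ ψ '' ((c i : Subgroup S) : Set S) := hset ▸ Set.mem_image_of_mem ψ hx
      obtain ⟨y, hy, hxy⟩ := this
      have := hF.injOn ψ D D' h.1 (hle i hy) (hle j hx) hxy
      rwa [← this]
    exact absurd (le_antisymm (hmono hij).le this) (ne_of_lt (hmono hij))
  · intro i
    exact hΩ.conj_invariant (c i) (hmem i) ψ _ (iso_fimg hF h.1 (hle i))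
  · apply SetLike.coe_injective
    rw [fimg_coeF hF h.1 (hle _), hlast, h.2]

theorem dimStar_conj {ψ : S → S} (h : IsFIso F ψ X Y) :
    dimStar Ω star X = dimStar Ω star Y := by
  obtain ⟨g, hg, _⟩ := hΩ.extend_star ψ X Y h
  obtain ⟨g', hg', _, _⟩ := iso_inv hF hg
  exact le_antisymm
    (dimEnd_le_of_iso hΩ hF hg (star_mem' hΩ X) (star_mem' hΩ Y))
    (dimEnd_le_of_iso hΩ hF hg' (star_mem' hΩ Y) (star_mem' hΩ X))

/-- Star images under isomorphisms defined on supergroups are determined. -/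
theorem star_image {h : S → S} {D D' K K' : Subgroup S} (hiso : IsFIso F h D D')
    (hKs : star K ≤ D) (hK's : star K' ≤ D')
    (himg : h '' (K : Set S) = (K' : Set S)) :
    h '' ((star K : Subgroup S) : Set S) = ((star K' : Subgroup S) : Set S) := by
  have hKD : K ≤ D := le_trans (le_star' hΩ K) hKs
  have hK'D : K' ≤ D' := le_trans (le_star' hΩ K') hK's
  obtain ⟨hb, hbiso, hbh, hhb⟩ := iso_inv hF hiso
  have hZΩ : fimg h (star K) ∈ Ω :=
    hΩ.conj_invariant (star K) (star_mem' hΩ K) h _ (iso_fimg hF hiso.1 hKs)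
  have h1 : K' ≤ fimg h (star K) := by
    intro x hx
    rw [← SetLike.mem_coe, ← himg] at hx
    obtain ⟨k, hk, rfl⟩ := hx
    exact mem_fimg_of (le_star' hΩ K hk)
  have h2 : star K' ≤ fimg h (star K) := star_min hΩ hZΩ h1
  have hZ'Ω : fimg hb (star K') ∈ Ω :=
    hΩ.conj_invariant (star K') (star_mem' hΩ K') hb _ (iso_fimg hF hbiso.1 hK's)
  have h3 : K ≤ fimg hb (star K') := by
    intro x hx
    have hx' : h x ∈ (K' : Set S) := himg ▸ Set.mem_image_of_mem h hx
    have : hb (h x) = x := hbh x (hKD hx)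
    rw [← this]
    exact mem_fimg_of (le_star' hΩ K' hx')
  have h4 : star K ≤ fimg hb (star K') := star_min hΩ hZ'Ω h3
  apply Set.Subset.antisymm
  · rintro _ ⟨x, hx, rfl⟩
    have hx' : x ∈ fimg hb (star K') := h4 hx
    rw [← SetLike.mem_coe, fimg_coeF hF hbiso.1 hK's] at hx'
    obtain ⟨y, hy, rfl⟩ := hx'
    rw [hhb y (hK's hy)]
    exact hy
  · intro y hy
    have : y ∈ fimg h (star K) := h2 hy
    rwa [← SetLike.mem_coe, fimg_coeF hF hiso.1 hKs] at this

end Dim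

section NFusSec

variable {S : Type*} [Group S] {F : HomPred S}
variable (hF : IsFusionSystem (⊤ : Subgroup S) F)
variable {W : Subgroup S} {f : S → S} {A B X Y : Subgroup S}

include hF

theorem nfus_to_F (h : NFus F W f A B) :
    F f A B ∧ A ≤ (Subgroup.normalizer (W : Set S)) ∧ B ≤ (Subgroup.normalizer (W : Set S)) := by
  have hE : IsFusionSystem (Subgroup.normalizer (W : Set S))
      (fun g X Y => F g X Y ∧ X ≤ (Subgroup.normalizer (W : Set S)) ∧ Y ≤ (Subgroup.normalizer (W : Set S))) := by
    constructor
    · exact fun f X Y h => ⟨h.2.1, h.2.2⟩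
    · exact fun f X Y h => hF.mapsTo f X Y h.1
    · exact fun f X Y h => hF.injOn f X Y h.1
    · exact fun f X Y h => hF.map_mul' f X Y h.1
    · exact fun f g X Y h he => ⟨hF.of_eqOn f g X Y h.1 he, h.2.1, h.2.2⟩
    · exact fun g hg X Y hX hY hc =>
        ⟨hF.conj_mem g (Subgroup.mem_top g) X Y le_top le_top hc, hX, hY⟩
    · exact fun f g X Y Z h1 h2 =>
        ⟨hF.comp_mem f g X Y Z h1.1 h2.1, h1.2.1, h2.2.2⟩
    · exact fun f X Y X₀ Y₀ h hX₀ hY₀ hmt =>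
        ⟨hF.restrict_mem f X Y X₀ Y₀ h.1 hX₀ hY₀ hmt, le_trans hX₀ h.2.1, le_trans hY₀ h.2.2⟩
    · intro f X Y h
      refine ⟨hF.corestrict_mem f X Y h.1, h.2.1, ?_⟩
      rw [Subgroup.closure_le]
      exact fun b hb => by
        obtain ⟨x, hx, rfl⟩ := hb
        exact h.2.2 (hF.mapsTo f X Y h.1 hx)
    · intro f X Y h
      obtain ⟨g, hg, hgf⟩ := hF.inv_mem f X Y h.1
      refine ⟨g, ⟨hg, ?_, h.2.1⟩, hgf⟩
      rw [Subgroup.closure_le]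
      exact fun b hb => by
        obtain ⟨x, hx, rfl⟩ := hb
        exact h.2.2 (hF.mapsTo f X Y h.1 hx)
  exact h _ hE (fun g A B h => h.1) (fun g A B h => ⟨h.2.2.1.1, h.1, h.2.1⟩)

omit hF in
theorem nphi_nfus (h : NPhi F W f A B) : NFus F W f A B :=
  fun _ _ _ hΦ => hΦ f A B h

theorem nfus_isFS : IsFusionSystem (Subgroup.normalizer (W : Set S)) (NFus F W) := by
  constructor
  · exact fun f X Y h => (nfus_to_F hF h).2
  · exact fun f X Y h => hF.mapsTo f X Y (nfus_to_F hF h).1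
  · exact fun f X Y h => hF.injOn f X Y (nfus_to_F hF h).1
  · exact fun f X Y h => hF.map_mul' f X Y (nfus_to_F hF h).1
  · exact fun f g X Y h he E hE h1 h2 => hE.of_eqOn f g X Y (h E hE h1 h2) he
  · exact fun g hg X Y hX hY hc E hE h1 h2 => hE.conj_mem g hg X Y hX hY hc
  · exact fun f g X Y Z ha hb E hE h1 h2 =>
      hE.comp_mem f g X Y Z (ha E hE h1 h2) (hb E hE h1 h2)
  · exact fun f X Y X₀ Y₀ h hX₀ hY₀ hmt E hE h1 h2 =>
      hE.restrict_mem f X Y X₀ Y₀ (h E hE h1 h2) hX₀ hY₀ hmt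
  · exact fun f X Y h E hE h1 h2 => hE.corestrict_mem f X Y (h E hE h1 h2)
  · intro f X Y h
    have hFf := (nfus_to_F hF h).1
    obtain ⟨g, hg, hgf⟩ := hF.inv_mem f X Y hFf
    refine ⟨g, ?_, hgf⟩
    intro E hE h1 h2
    obtain ⟨gE, hgE, hgEf⟩ := hE.inv_mem f X Y (h E hE h1 h2)
    apply hE.of_eqOn gE g _ _ hgE
    have hco : ((Subgroup.closure (f '' (X : Set S)) : Subgroup S) : Set S)
        = f '' (X : Set S) := fimg_coeF hF hFf (le_refl X)
    intro b hb
    rw [hco] at hb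
    obtain ⟨x, hx, rfl⟩ := hb
    rw [hgf x hx, hgEf x hx]

theorem nfus_ext (h : NFus F W f A B) :
    ∃ g, F g (A ⊔ W) (B ⊔ W) ∧ Set.EqOn g f (A : Set S) ∧
      g '' (W : Set S) = (W : Set S) := by
  let E : HomPred S := fun f A B =>
    A ≤ (Subgroup.normalizer (W : Set S)) ∧ B ≤ (Subgroup.normalizer (W : Set S)) ∧ F f A B ∧
      ∃ g, F g (A ⊔ W) (B ⊔ W) ∧ Set.EqOn g f (A : Set S) ∧
        g '' (W : Set S) = (W : Set S)
  have hE : IsFusionSystem (Subgroup.normalizer (W : Set S)) E := by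
    constructor
    · exact fun f X Y h => ⟨h.1, h.2.1⟩
    · exact fun f X Y h => hF.mapsTo f X Y h.2.2.1
    · exact fun f X Y h => hF.injOn f X Y h.2.2.1
    · exact fun f X Y h => hF.map_mul' f X Y h.2.2.1
    · rintro f g X Y ⟨hX, hY, hf, f₂, hf₂, heq, hfW⟩ he
      exact ⟨hX, hY, hF.of_eqOn f g X Y hf he, f₂, hf₂,
        fun x hx => (heq hx).trans (he hx).symm, hfW⟩
    · intro g hg X Y hX hY hc
      refine ⟨hX, hY, hF.conj_mem g (Subgroup.mem_top g) X Y le_top le_top hc,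
        fun x => g⁻¹ * x * g, ?_, fun x _ => rfl, conj_image_normalizer hg⟩
      apply hF.conj_mem g (Subgroup.mem_top g) _ _ le_top le_top
      intro x hx
      refine forall_sup_map_mem (D := (⊤ : Subgroup S)) (f := fun x => g⁻¹ * x * g)
        (fun a _ b _ => by group) le_top le_top ?_ ?_ x hx
      · exact fun a ha => (le_sup_left : Y ≤ Y ⊔ W) (hc a ha)
      · exact fun b hb => (le_sup_right : W ≤ Y ⊔ W) (conj_mem_of_normalizer hg hb)
    · rintro f g X Y Z ⟨hX, hY, hf, f₂, hf₂, hef, hfW⟩ ⟨_, hZ, hg, g₂, hg₂, heg, hgW⟩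
      refine ⟨hX, hZ, hF.comp_mem f g X Y Z hf hg, g₂ ∘ f₂,
        hF.comp_mem _ _ _ _ _ hf₂ hg₂, ?_, ?_⟩
      · intro x hx
        show g₂ (f₂ x) = g (f x)
        rw [hef hx]
        exact heg (hF.mapsTo f X Y hf hx)
      · show (g₂ ∘ f₂) '' (W : Set S) = (W : Set S)
        rw [Set.image_comp, hfW, hgW]
    · rintro f X Y X₀ Y₀ ⟨hX, hY, hf, f₂, hf₂, hef, hfW⟩ hX₀ hY₀ hmt
      refine ⟨le_trans hX₀ hX, le_trans hY₀ hY,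
        hF.restrict_mem f X Y X₀ Y₀ hf hX₀ hY₀ hmt,
        f₂, ?_, fun x hx => hef (hX₀ hx), hfW⟩
      apply hF.restrict_mem f₂ (X ⊔ W) (Y ⊔ W) (X₀ ⊔ W) (Y₀ ⊔ W) hf₂
        (sup_le_sup_right hX₀ W) (sup_le_sup_right hY₀ W)
      apply mapsTo_sup (D := X ⊔ W) (hmul_of hF hf₂)
        (le_trans hX₀ le_sup_left) le_sup_right
      · intro x hx
        have hx' : x ∈ (X : Set S) := hX₀ hx
        rw [hef hx']
        exact (le_sup_left : Y₀ ≤ Y₀ ⊔ W) (hmt hx)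
      · intro w hw
        have hmem : f₂ w ∈ (W : Set S) := hfW ▸ Set.mem_image_of_mem f₂ hw
        exact (le_sup_right : W ≤ Y₀ ⊔ W) hmem
    · rintro f X Y ⟨hX, hY, hf, f₂, hf₂, hef, hfW⟩
      refine ⟨hX, le_trans (fimg_le hF hf le_rfl) hY,
        hF.corestrict_mem f X Y hf, f₂, ?_, hef, hfW⟩
      apply hF.restrict_mem f₂ (X ⊔ W) (Y ⊔ W) (X ⊔ W) (fimg f X ⊔ W) hf₂ le_rfl
        (sup_le_sup_right (fimg_le hF hf le_rfl) W)
      apply mapsTo_sup (D := X ⊔ W) (hmul_of hF hf₂) le_sup_left le_sup_right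
      · intro x hx
        rw [hef hx]
        exact (le_sup_left : fimg f X ≤ fimg f X ⊔ W) (mem_fimg_of hx)
      · intro w hw
        have hmem : f₂ w ∈ (W : Set S) := hfW ▸ Set.mem_image_of_mem f₂ hw
        exact (le_sup_right : W ≤ fimg f X ⊔ W) hmem
    · rintro f X Y ⟨hX, hY, hf, f₂, hf₂, hef, hfW⟩
      obtain ⟨g₀, hg₀, hg₀f⟩ := hF.inv_mem f X Y hf
      obtain ⟨h₂, hh₂, hh₂f₂⟩ := hF.inv_mem f₂ (X ⊔ W) (Y ⊔ W) hf₂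
      have hcoX : ((Subgroup.closure (f '' (X : Set S)) : Subgroup S) : Set S)
          = f '' (X : Set S) := fimg_coeF hF hf le_rfl
      have hle : Subgroup.closure (f '' (X : Set S)) ⊔ W ≤
          Subgroup.closure (f₂ '' ((X ⊔ W : Subgroup S) : Set S)) := by
        apply sup_le
        · rw [Subgroup.closure_le]
          rintro _ ⟨x, hx, rfl⟩
          rw [← hef hx]
          exact Subgroup.subset_closure
            (Set.mem_image_of_mem f₂ ((le_sup_left : X ≤ X ⊔ W) hx))
        · intro w hw
          have hw' : w ∈ f₂ '' (W : Set S) := hfW.symm ▸ hw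
          obtain ⟨u, hu, rfl⟩ := hw'
          exact Subgroup.subset_closure
            (Set.mem_image_of_mem f₂ ((le_sup_right : W ≤ X ⊔ W) hu))
      refine ⟨g₀, ⟨?_, hX, hg₀, h₂, ?_, ?_, ?_⟩, hg₀f⟩
      · rw [Subgroup.closure_le]
        rintro _ ⟨x, hx, rfl⟩
        exact hY (hF.mapsTo f X Y hf hx)
      · apply hF.restrict_mem h₂ _ (X ⊔ W) _ (X ⊔ W) hh₂ hle le_rfl
        exact fun b hb => hF.mapsTo _ _ _ hh₂ (hle hb)
      · intro b hb
        rw [hcoX] at hb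
        obtain ⟨x, hx, rfl⟩ := hb
        calc h₂ (f x) = h₂ (f₂ x) := by rw [hef hx]
          _ = x := hh₂f₂ x ((le_sup_left : X ≤ X ⊔ W) hx)
          _ = g₀ (f x) := (hg₀f x hx).symm
      · apply Set.Subset.antisymm
        · rintro _ ⟨w, hw, rfl⟩
          have hw' : w ∈ f₂ '' (W : Set S) := hfW.symm ▸ hw
          obtain ⟨u, hu, rfl⟩ := hw'
          rw [hh₂f₂ u ((le_sup_right : W ≤ X ⊔ W) hu)]
          exact hu
        · intro u hu
          exact ⟨f₂ u, hfW ▸ Set.mem_image_of_mem f₂ hu,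
            hh₂f₂ u ((le_sup_right : W ≤ X ⊔ W) hu)⟩
  have hres := h E hE (fun g A B h => h.2.2.1)
    (fun g A B hp => ⟨hp.1, hp.2.1, hp.2.2.1.1, hp.2.2.2.choose,
      hp.2.2.2.choose_spec.1.1, hp.2.2.2.choose_spec.2.1, hp.2.2.2.choose_spec.2.2⟩)
  exact hres.2.2.2

theorem nfus_fix (h : NFus F W f A B) (hWA : W ≤ A) :
    f '' (W : Set S) = (W : Set S) := by
  obtain ⟨g₂, hg₂, heq, hgW⟩ := nfus_ext hF h
  have he : Set.EqOn f g₂ (W : Set S) := fun x hx => (heq (hWA hx)).symm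
  rw [Set.image_congr he, hgW]

theorem mk_nfiso {h : S → S} (hA : A ≤ (Subgroup.normalizer (W : Set S))) (hB : B ≤ (Subgroup.normalizer (W : Set S)))
    (hiso : IsFIso F h A B) (hWA : W ≤ A) (hfix : h '' (W : Set S) = (W : Set S)) :
    IsFIso (NFus F W) h A B := by
  have hWB : W ≤ B := by
    intro w hw
    have : w ∈ h '' (W : Set S) := hfix.symm ▸ hw
    obtain ⟨u, hu, rfl⟩ := this
    rw [← SetLike.mem_coe, ← hiso.2]
    exact Set.mem_image_of_mem h (hWA hu)
  refine ⟨nphi_nfus ⟨hA, hB, hiso, h, ?_, fun x _ => rfl, hfix⟩, hiso.2⟩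
  rw [sup_eq_left.mpr hWA, sup_eq_left.mpr hWB]
  exact hiso

theorem nfus_iso_ext (h : IsFIso (NFus F W) f A B) :
    ∃ g, IsFIso (NFus F W) g (A ⊔ W) (B ⊔ W) ∧ Set.EqOn g f (A : Set S) ∧
      g '' (W : Set S) = (W : Set S) := by
  obtain ⟨g₂, hg₂, heq, hgW⟩ := nfus_ext hF h.1
  have hA := (nfus_to_F hF h.1).2.1
  have hB := (nfus_to_F hF h.1).2.2
  have hBW : fimg g₂ (A ⊔ W) = B ⊔ W := by
    rw [fimg_sup (hmul_of hF hg₂) le_sup_left le_sup_right]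
    congr 1
    · apply SetLike.coe_injective
      rw [fimg_coeF hF hg₂ le_sup_left, Set.image_congr heq, h.2]
    · apply SetLike.coe_injective
      rw [fimg_coeF hF hg₂ le_sup_right, hgW]
  have hiso : IsFIso F g₂ (A ⊔ W) (B ⊔ W) := by
    have h2 := iso_fimg hF hg₂ (le_refl (A ⊔ W))
    rwa [hBW] at h2
  exact ⟨g₂, mk_nfiso hF (sup_le hA Subgroup.le_normalizer)
    (sup_le hB Subgroup.le_normalizer) hiso le_sup_right (by
      rw [Set.image_congr (fun x hx => rfl), hgW]), heq, hgW⟩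

theorem triv_normal : NormalInF (Subgroup.normalizer (W : Set S)) (NFus F W) W := by
  refine ⟨Subgroup.le_normalizer, fun g hg n hn => conj_mem_of_normalizer hg hn, ?_⟩
  intro f X Y hiso
  exact nfus_iso_ext hF hiso

theorem normal_join {M N : Subgroup S} (hM : NormalInF (Subgroup.normalizer (W : Set S)) (NFus F W) M)
    (hN : NormalInF (Subgroup.normalizer (W : Set S)) (NFus F W) N) :
    NormalInF (Subgroup.normalizer (W : Set S)) (NFus F W) (M ⊔ N) := by
  obtain ⟨hM1, hM2, hM3⟩ := hM
  obtain ⟨hN1, hN2, hN3⟩ := hN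
  refine ⟨sup_le hM1 hN1, ?_, ?_⟩
  · intro g hg x hx
    exact forall_sup_map_mem (D := (⊤ : Subgroup S)) (f := fun x => g⁻¹ * x * g)
      (fun a _ b _ => by group) le_top le_top
      (fun a ha => (le_sup_left : M ≤ M ⊔ N) (hM2 g hg a ha))
      (fun b hb => (le_sup_right : N ≤ M ⊔ N) (hN2 g hg b hb)) x hx
  · intro f X Y hiso
    obtain ⟨g₁, hg₁, he₁, hg₁M⟩ := hM3 f X Y hiso
    obtain ⟨g₂, hg₂, he₂, hg₂N⟩ := hN3 g₁ (X ⊔ M) (Y ⊔ M) hg₁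
    rw [sup_assoc, sup_assoc] at hg₂
    refine ⟨g₂, hg₂, ?_, ?_⟩
    · intro x hx
      exact (he₂ ((le_sup_left : X ≤ X ⊔ M) hx)).trans (he₁ hx)
    · have hFg₂ : F g₂ (X ⊔ (M ⊔ N)) (Y ⊔ (M ⊔ N)) := (nfus_to_F hF hg₂.1).1
      have hMle : M ≤ X ⊔ (M ⊔ N) := le_trans le_sup_left le_sup_right
      have hNle : N ≤ X ⊔ (M ⊔ N) := le_trans le_sup_right le_sup_right
      have h1 : fimg g₂ (M ⊔ N) = M ⊔ N := by
        rw [fimg_sup (hmul_of hF hFg₂) hMle hNle]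
        congr 1
        · apply SetLike.coe_injective
          rw [fimg_coeF hF hFg₂ hMle]
          have he : Set.EqOn g₂ g₁ (M : Set S) :=
            fun x hx => he₂ ((le_sup_right : M ≤ X ⊔ M) hx)
          rw [Set.image_congr he, hg₁M]
        · apply SetLike.coe_injective
          rw [fimg_coeF hF hFg₂ hNle, hg₂N]
      calc g₂ '' ((M ⊔ N : Subgroup S) : Set S)
          = ((fimg g₂ (M ⊔ N) : Subgroup S) : Set S) :=
            (fimg_coeF hF hFg₂ le_sup_right).symm
        _ = ((M ⊔ N : Subgroup S) : Set S) := by rw [h1]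

theorem normal_img_eq {N Q : Subgroup S} (hN : NormalInF (Subgroup.normalizer (W : Set S)) (NFus F W) N)
    {σ : S → S} (hσ : IsFIso (NFus F W) σ N Q) :
    Q = N := by
  obtain ⟨g, hg, heq, hgN⟩ := hN.2.2 σ N Q hσ
  rw [sup_idem] at hg
  have h2 : σ '' (N : Set S) = g '' (N : Set S) :=
    Set.image_congr (fun x hx => (heq hx).symm)
  have h4 : (Q : Set S) = (N : Set S) := by rw [← hσ.2, h2, hgN]
  exact SetLike.coe_injective h4

theorem normal_endo_fix {N : Subgroup S} (hN : NormalInF (Subgroup.normalizer (W : Set S)) (NFus F W) N)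
    (hWN : W ≤ N) {e : S → S} (he : F e (Subgroup.normalizer (W : Set S)) (Subgroup.normalizer (W : Set S)))
    (heW : e '' (W : Set S) = (W : Set S)) : e '' (N : Set S) = (N : Set S) := by
  have hN1 : N ≤ (Subgroup.normalizer (W : Set S)) := hN.1
  have hiso : IsFIso F e N (fimg e N) := iso_fimg hF he hN1
  have hNfus : IsFIso (NFus F W) e N (fimg e N) :=
    mk_nfiso hF hN1 (fimg_le hF he hN1) hiso hWN heW
  have heq := normal_img_eq hF hN hNfus
  calc e '' (N : Set S) = ((fimg e N : Subgroup S) : Set S) :=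
        (fimg_coeF hF he hN1).symm
    _ = (N : Set S) := by rw [heq]

theorem normalizer_pres {h : S → S} {D D' : Subgroup S} (hh : IsFIso F h D D')
    (hW : W ≤ D) (hhW : h '' (W : Set S) = (W : Set S)) :
    ∀ x ∈ D, x ∈ (Subgroup.normalizer (W : Set S)) → h x ∈ (Subgroup.normalizer (W : Set S)) := by
  intro x hxD hxn
  have h1 := normalizer_transport hF hh.1 hW hxD hxn
  have hfW : fimg h W = W := SetLike.coe_injective (by rw [fimg_coeF hF hh.1 hW, hhW])
  rwa [hfW] at h1

end NFusSec

section Soc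

variable {S : Type*} [Group S] {F : HomPred S} {Ω : Set (Subgroup S)}
  {star : Subgroup S → Subgroup S}
variable (hΩ : IsStratification ⊤ F Ω star) (hF : IsFusionSystem (⊤ : Subgroup S) F)
variable {W : Subgroup S}

include hΩ hF

theorem conj_top_iso {g : S} : IsFIso F (fun x => g⁻¹ * x * g) ⊤ ⊤ := by
  refine ⟨hF.conj_mem g (Subgroup.mem_top g) ⊤ ⊤ le_top le_top
    (fun x _ => Subgroup.mem_top _), ?_⟩
  apply Set.Subset.antisymm
  · intro y _; exact Subgroup.mem_top y
  · intro y _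
    exact ⟨g * y * g⁻¹, Subgroup.mem_top _, by group⟩

theorem normal_bullet {N : Subgroup S} (hN : NormalInF (Subgroup.normalizer (W : Set S)) (NFus F W) N)
    (hWN : W ≤ N) :
    NormalInF (Subgroup.normalizer (W : Set S)) (NFus F W) (star N ⊓ (Subgroup.normalizer (W : Set S))) := by
  obtain ⟨hN1, hN2, hN3⟩ := hN
  have hNfull : NormalInF (Subgroup.normalizer (W : Set S)) (NFus F W) N := ⟨hN1, hN2, hN3⟩
  refine ⟨inf_le_right, ?_, ?_⟩
  · intro g hg x hx
    obtain ⟨hxs, hxn⟩ := Subgroup.mem_inf.mp hx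
    rw [Subgroup.mem_inf]
    constructor
    · have himgN : (fun x => g⁻¹ * x * g) '' (N : Set S) = (N : Set S) := by
        apply Set.Subset.antisymm
        · rintro _ ⟨n, hn, rfl⟩; exact hN2 g hg n hn
        · intro n hn
          refine ⟨g * n * g⁻¹, ?_, by group⟩
          have := hN2 g⁻¹ (inv_mem hg) n hn
          simpa using this
      have hsi := star_image hΩ hF (conj_top_iso hΩ hF (g := g)) le_top le_top himgN
      have : g⁻¹ * x * g ∈ (fun x => g⁻¹ * x * g) '' ((star N : Subgroup S) : Set S) :=
        Set.mem_image_of_mem _ hxs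
      rw [hsi] at this
      exact this
    · exact mul_mem (mul_mem (inv_mem hg) hxn) hg
  · intro f X Y hiso
    obtain ⟨g₁, hg₁, he₁, hg₁N⟩ := hN3 f X Y hiso
    have hFg₁ : F g₁ (X ⊔ N) (Y ⊔ N) := (nfus_to_F hF hg₁.1).1
    have hg₁iso : IsFIso F g₁ (X ⊔ N) (Y ⊔ N) := ⟨hFg₁, hg₁.2⟩
    have hg₁W : g₁ '' (W : Set S) = (W : Set S) :=
      nfus_fix hF hg₁.1 (le_trans hWN le_sup_right)
    obtain ⟨gb, hgbiso, hgbeq⟩ := hΩ.extend_star g₁ (X ⊔ N) (Y ⊔ N) hg₁iso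
    have hXNs : (X ⊔ N : Subgroup S) ≤ star (X ⊔ N) := le_star' hΩ _
    have hNleD : star N ≤ star (X ⊔ N) := star_mono' hΩ le_sup_right
    have hNleD' : star N ≤ star (Y ⊔ N) := star_mono' hΩ le_sup_right
    have hgbN : gb '' (N : Set S) = (N : Set S) := by
      rw [Set.image_congr (fun x hx => hgbeq ((le_sup_right : N ≤ X ⊔ N) hx)), hg₁N]
    have hgbW : gb '' (W : Set S) = (W : Set S) := by
      rw [Set.image_congr
        (fun x hx => hgbeq ((le_trans hWN le_sup_right : W ≤ X ⊔ N) hx)), hg₁W]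
    have hstarfix : gb '' ((star N : Subgroup S) : Set S) = ((star N : Subgroup S) : Set S) :=
      star_image hΩ hF hgbiso hNleD hNleD' hgbN
    obtain ⟨gb', hgb'iso, hgb'gb, hgbgb'⟩ := iso_inv hF hgbiso
    have hgb'N : gb' '' (N : Set S) = (N : Set S) := by
      apply Set.Subset.antisymm
      · rintro _ ⟨n, hn, rfl⟩
        have : n ∈ gb '' (N : Set S) := hgbN.symm ▸ hn
        obtain ⟨m, hm, rfl⟩ := this
        rw [hgb'gb m (hXNs ((le_sup_right : N ≤ X ⊔ N) hm))]
        exact hm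
      · intro m hm
        refine ⟨gb m, hgbN ▸ Set.mem_image_of_mem gb hm, ?_⟩
        exact hgb'gb m (hXNs ((le_sup_right : N ≤ X ⊔ N) hm))
    have hgb'W : gb' '' (W : Set S) = (W : Set S) := by
      apply Set.Subset.antisymm
      · rintro _ ⟨n, hn, rfl⟩
        have : n ∈ gb '' (W : Set S) := hgbW.symm ▸ hn
        obtain ⟨m, hm, rfl⟩ := this
        rw [hgb'gb m (hXNs ((le_trans hWN le_sup_right : W ≤ X ⊔ N) hm))]
        exact hm
      · intro m hm
        refine ⟨gb m, hgbW ▸ Set.mem_image_of_mem gb hm, ?_⟩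
        exact hgb'gb m (hXNs ((le_trans hWN le_sup_right : W ≤ X ⊔ N) hm))
    have hgb'star : gb' '' ((star N : Subgroup S) : Set S) = ((star N : Subgroup S) : Set S) :=
      star_image hΩ hF hgb'iso hNleD' hNleD hgb'N
    set N' := star N ⊓ (Subgroup.normalizer (W : Set S)) with hN'def
    have hWleN' : W ≤ N' := le_inf (le_trans hWN (le_star' hΩ N)) Subgroup.le_normalizer
    have hN'set : gb '' ((N' : Subgroup S) : Set S) = ((N' : Subgroup S) : Set S) := by
      apply Set.Subset.antisymm
      · rintro _ ⟨x, hx, rfl⟩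
        obtain ⟨hxs, hxn⟩ := Subgroup.mem_inf.mp hx
        rw [SetLike.mem_coe, Subgroup.mem_inf]
        constructor
        · have : gb x ∈ gb '' ((star N : Subgroup S) : Set S) :=
            Set.mem_image_of_mem gb hxs
          rwa [hstarfix] at this
        · exact normalizer_pres hF hgbiso
            (le_trans hWN (le_trans (le_star' hΩ N) hNleD))
            hgbW x (hNleD hxs) hxn
      · intro y hy
        obtain ⟨hys, hyn⟩ := Subgroup.mem_inf.mp hy
        have hy' : gb' y ∈ N' := by
          rw [Subgroup.mem_inf]
          constructor
          · have : gb' y ∈ gb' '' ((star N : Subgroup S) : Set S) :=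
              Set.mem_image_of_mem gb' hys
            rwa [hgb'star] at this
          · exact normalizer_pres hF hgb'iso
              (le_trans hWN (le_trans (le_star' hΩ N) hNleD'))
              hgb'W y (hNleD' hys) hyn
        refine ⟨gb' y, hy', ?_⟩
        exact hgbgb' y (hNleD' hys)
    have hXle : X ≤ star (X ⊔ N) := le_trans le_sup_left hXNs
    have hN'le : N' ≤ star (X ⊔ N) := le_trans inf_le_left hNleD
    have hdom : X ⊔ N' ≤ star (X ⊔ N) := sup_le hXle hN'le
    have hFgb := hgbiso.1
    have himg2 : fimg gb (X ⊔ N') = Y ⊔ N' := by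
      rw [fimg_sup (hmul_of hF hFgb) hXle hN'le]
      congr 1
      · apply SetLike.coe_injective
        rw [fimg_coeF hF hFgb hXle]
        have he : Set.EqOn gb f (X : Set S) :=
          fun x hx => (hgbeq ((le_sup_left : X ≤ X ⊔ N) hx)).trans (he₁ hx)
        rw [Set.image_congr he, hiso.2]
      · apply SetLike.coe_injective
        rw [fimg_coeF hF hFgb hN'le, hN'set]
    have hgbr : IsFIso F gb (X ⊔ N') (Y ⊔ N') := by
      have h2 := iso_fimg hF hFgb hdom
      rwa [himg2] at h2
    have hXnrm : X ≤ (Subgroup.normalizer (W : Set S)) := (nfus_to_F hF hiso.1).2.1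
    have hYnrm : Y ≤ (Subgroup.normalizer (W : Set S)) := (nfus_to_F hF hiso.1).2.2
    refine ⟨gb, mk_nfiso hF (sup_le hXnrm inf_le_right) (sup_le hYnrm inf_le_right)
      hgbr (le_trans hWleN' le_sup_right) hgbW, ?_, hN'set⟩
    intro x hx
    exact (hgbeq ((le_sup_left : X ≤ X ⊔ N) hx)).trans (he₁ hx)

theorem soc_exists :
    ∃ M, IsGreatest {N : Subgroup S | NormalInF (Subgroup.normalizer (W : Set S)) (NFus F W) N} M := by
  classical
  set SocSet : Set (Subgroup S) := {N | NormalInF (Subgroup.normalizer (W : Set S)) (NFus F W) N} with hSoc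
  set dset : Set ℕ := (fun N => dimEnd Ω (star N)) ''
    {N : Subgroup S | N ∈ SocSet ∧ W ≤ N} with hdset
  have hWmem : W ∈ SocSet := triv_normal hF
  have hne : dset.Nonempty := ⟨_, ⟨W, ⟨hWmem, le_rfl⟩, rfl⟩⟩
  have hbdd : BddAbove dset := by
    obtain ⟨B₀, hB₀⟩ := hΩ.finDim
    refine ⟨B₀, ?_⟩
    rintro _ ⟨N, _, rfl⟩
    apply csSup_le ⟨0, chainSet_zero (star_mem' hΩ N)⟩
    rintro n ⟨c, hc, hmem, _⟩
    exact hB₀ n ⟨c, hc, hmem⟩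
  obtain ⟨N₁', hN₁'mem, hd⟩ := Nat.sSup_mem hne hbdd
  obtain ⟨hN₁'norm, hWN₁'⟩ := hN₁'mem
  set N₁ := star N₁' ⊓ (Subgroup.normalizer (W : Set S)) with hN₁def
  have hN₁ : N₁ ∈ SocSet := normal_bullet hΩ hF hN₁'norm hWN₁'
  have hN₁'le : N₁' ≤ N₁ := le_inf (le_star' hΩ N₁') hN₁'norm.1
  have hstar_eq : star N₁ = star N₁' :=
    le_antisymm (star_min hΩ (star_mem' hΩ N₁') inf_le_left) (star_mono' hΩ hN₁'le)
  refine ⟨N₁, hN₁, ?_⟩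
  intro N hN
  have hJ : N₁ ⊔ N ∈ SocSet := normal_join hF hN₁ hN
  have hWJ : W ≤ N₁ ⊔ N := le_trans (le_trans hWN₁' hN₁'le) le_sup_left
  have hdJ : dimEnd Ω (star (N₁ ⊔ N)) ≤ sSup dset :=
    le_csSup hbdd ⟨N₁ ⊔ N, ⟨hJ, hWJ⟩, rfl⟩
  have hmono : star N₁' ≤ star (N₁ ⊔ N) :=
    star_mono' hΩ (le_trans hN₁'le le_sup_left)
  have hd' : dimEnd Ω (star N₁') = sSup dset := hd
  have heq : star N₁' = star (N₁ ⊔ N) := by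
    apply eq_of_le_of_dimEnd_le hΩ (star_mem' hΩ _) (star_mem' hΩ _) hmono
    rw [hd']
    exact hdJ
  have h1 : N ≤ star (N₁ ⊔ N) := le_trans le_sup_right (le_star' hΩ _)
  rw [← heq] at h1
  exact le_inf h1 hN.1

end Soc

section CFL

variable {S : Type*} [Group S] {F : HomPred S}
variable (hF : IsFusionSystem (⊤ : Subgroup S) F)
variable {W W' : Subgroup S} {β : S → S}

include hF

/-- Conjugation functor: pushing morphisms of `N_F(W')` forward along
`β : N_S(W') → N_S(W)` with `β(W') = W`. -/
theorem cfl (hβF : F β (Subgroup.normalizer (W' : Set S)) (Subgroup.normalizer (W : Set S)))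
    (hβW : β '' (W' : Set S) = (W : Set S)) :
    ∃ βb : S → S, (∀ z ∈ (Subgroup.normalizer (W' : Set S)), βb (β z) = z) ∧
      IsFIso F βb (fimg β (Subgroup.normalizer (W' : Set S))) (Subgroup.normalizer (W' : Set S)) ∧
      ∀ f A B, NFus F W' f A B → NFus F W (β ∘ f ∘ βb) (fimg β A) (fimg β B) := by
  have hNW := nfus_isFS hF (W := W)
  have hβmul := hmul_of hF hβF
  have hβiso : IsFIso F β (Subgroup.normalizer (W' : Set S)) (fimg β (Subgroup.normalizer (W' : Set S))) :=
    iso_fimg hF hβF le_rfl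
  obtain ⟨βb, hβbiso, hβb, hββb'⟩ := iso_inv hF hβiso
  have hββb : ∀ y ∈ β '' (((Subgroup.normalizer (W' : Set S)) : Subgroup S) : Set S), β (βb y) = y := by
    intro y hy
    apply hββb'
    rw [fimg_coeF hF hβF le_rfl]
    exact hy
  have hrng : ∀ {A : Subgroup S}, A ≤ (Subgroup.normalizer (W' : Set S)) → fimg β A ≤ (Subgroup.normalizer (W : Set S)) :=
    fun hA => fimg_le hF hβF hA
  have hco : ∀ {A : Subgroup S}, A ≤ (Subgroup.normalizer (W' : Set S)) →
      ((fimg β A : Subgroup S) : Set S) = β '' (A : Set S) :=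
    fun hA => fimg_coeF hF hβF hA
  set E : HomPred S := fun g A B =>
    A ≤ (Subgroup.normalizer (W' : Set S)) ∧ B ≤ (Subgroup.normalizer (W' : Set S)) ∧ Set.MapsTo g (A : Set S) (B : Set S) ∧
      NFus F W (β ∘ g ∘ βb) (fimg β A) (fimg β B) with hEdef
  have hEpt : ∀ {g : S → S} {A : Subgroup S}, A ≤ (Subgroup.normalizer (W' : Set S)) →
      ∀ a ∈ (A : Set S), (β ∘ g ∘ βb) (β a) = β (g a) := by
    intro g A hA a ha
    show β (g (βb (β a))) = β (g a)
    rw [hβb a (hA ha)]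
  have hmulE : ∀ (g : S → S) (A B : Subgroup S), E g A B →
      ∀ x ∈ A, ∀ y ∈ A, g (x * y) = g x * g y := by
    rintro g A B ⟨hA, hB, hmt, hc⟩ x hx y hy
    have hFc := (nfus_to_F hF hc).1
    have hcm := hmul_of hF hFc
    have e1 : (β ∘ g ∘ βb) (β x * β y) = β (g (x * y)) := by
      rw [← hβmul x (hA hx) y (hA hy)]
      exact hEpt hA (x * y) (mul_mem hx hy)
    have e4 : (β ∘ g ∘ βb) (β x * β y) =
        (β ∘ g ∘ βb) (β x) * (β ∘ g ∘ βb) (β y) :=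
      hcm (β x) (mem_fimg_of hx) (β y) (mem_fimg_of hy)
    have e5 : β (g (x * y)) = β (g x * g y) := by
      rw [← e1, e4, hEpt hA x hx, hEpt hA y hy,
        hβmul (g x) (hB (hmt hx)) (g y) (hB (hmt hy))]
    exact hF.injOn β _ _ hβF (hB (hmt (mul_mem hx hy)))
      (hB (mul_mem (hmt hx) (hmt hy))) e5
  have hkeyc : ∀ (f : S → S) (A B : Subgroup S), E f A B →
      Subgroup.closure ((β ∘ f ∘ βb) '' ((fimg β A : Subgroup S) : Set S))
        = fimg β (Subgroup.closure (f '' (A : Set S))) := by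
    rintro f A B hEf
    obtain ⟨hA, hB, hmt, hc⟩ := hEf
    have hfA : ((Subgroup.closure (f '' (A : Set S)) : Subgroup S) : Set S)
        = f '' (A : Set S) :=
      fimg_coe (hmulE f A B ⟨hA, hB, hmt, hc⟩) le_rfl
    have hsets : (β ∘ f ∘ βb) '' ((fimg β A : Subgroup S) : Set S)
        = β '' (f '' (A : Set S)) := by
      rw [hco hA]
      apply Set.Subset.antisymm
      · rintro _ ⟨z, hz, rfl⟩
        obtain ⟨a, ha, rfl⟩ := hz
        rw [hEpt hA a ha]
        exact Set.mem_image_of_mem β (Set.mem_image_of_mem f ha)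
      · rintro _ ⟨z, hz, rfl⟩
        obtain ⟨a, ha, rfl⟩ := hz
        exact ⟨β a, Set.mem_image_of_mem β ha, hEpt hA a ha⟩
    show Subgroup.closure _ =
      Subgroup.closure (β '' ((Subgroup.closure (f '' (A : Set S)) : Subgroup S) : Set S))
    rw [hsets, hfA]
  have hE : IsFusionSystem (Subgroup.normalizer (W' : Set S)) E := by
    constructor
    · exact fun f X Y h => ⟨h.1, h.2.1⟩
    · exact fun f X Y h => h.2.2.1
    · rintro g A B ⟨hA, hB, hmt, hc⟩ x hx y hy hxy
      have hFc := (nfus_to_F hF hc).1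
      have e6 : (β ∘ g ∘ βb) (β x) = (β ∘ g ∘ βb) (β y) := by
        rw [hEpt hA x hx, hEpt hA y hy, hxy]
      have e7 : β x = β y :=
        hF.injOn _ _ _ hFc (mem_fimg_of hx) (mem_fimg_of hy) e6
      exact hF.injOn β _ _ hβF (hA hx) (hA hy) e7
    · exact hmulE
    · rintro g g' A B ⟨hA, hB, hmt, hc⟩ he
      refine ⟨hA, hB, fun a ha => by rw [he ha]; exact hmt ha, ?_⟩
      apply hNW.of_eqOn _ _ _ _ hc
      intro z hz
      rw [hco hA] at hz
      obtain ⟨a, ha, rfl⟩ := hz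
      show β (g' (βb (β a))) = β (g (βb (β a)))
      rw [hβb a (hA ha), he ha]
    · intro g hg A B hA hB hcond
      refine ⟨hA, hB, fun a ha => hcond a ha, ?_⟩
      have hcondβ : ∀ z ∈ fimg β A, (β g)⁻¹ * z * β g ∈ fimg β B := by
        intro z hz
        rw [← SetLike.mem_coe, hco hA] at hz
        obtain ⟨a, ha, rfl⟩ := hz
        rw [← map_conj_of_mul hβmul hg (hA ha)]
        exact mem_fimg_of (hcond a ha)
      have hβg : β g ∈ (Subgroup.normalizer (W : Set S)) := hF.mapsTo β _ _ hβF hg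
      have hconj := hNW.conj_mem (β g) hβg (fimg β A) (fimg β B)
        (hrng hA) (hrng hB) hcondβ
      apply hNW.of_eqOn _ _ _ _ hconj
      intro z hz
      rw [hco hA] at hz
      obtain ⟨a, ha, rfl⟩ := hz
      show β (g⁻¹ * βb (β a) * g) = (β g)⁻¹ * β a * β g
      rw [hβb a (hA ha)]
      exact map_conj_of_mul hβmul hg (hA ha)
    · rintro f g A B C ⟨hA, hB, hmtf, hcf⟩ ⟨hB', hC, hmtg, hcg⟩
      refine ⟨hA, hC, fun a ha => hmtg (hmtf ha), ?_⟩
      have hcomp := hNW.comp_mem _ _ _ _ _ hcf hcg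
      apply hNW.of_eqOn _ _ _ _ hcomp
      intro z hz
      rw [hco hA] at hz
      obtain ⟨a, ha, rfl⟩ := hz
      show β ((g ∘ f) (βb (β a))) = β (g (βb (β (f (βb (β a))))))
      rw [hβb a (hA ha)]
      show β (g (f a)) = β (g (βb (β (f a))))
      rw [hβb (f a) (hB (hmtf ha))]
    · rintro f A B A₀ B₀ ⟨hA, hB, hmt, hc⟩ hA₀ hB₀ hmt₀
      refine ⟨le_trans hA₀ hA, le_trans hB₀ hB, hmt₀, ?_⟩
      apply hNW.restrict_mem _ _ _ _ _ hc (fimg_mono hA₀) (fimg_mono hB₀)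
      intro z hz
      rw [hco (le_trans hA₀ hA)] at hz
      obtain ⟨a, ha, rfl⟩ := hz
      show (β ∘ f ∘ βb) (β a) ∈ ((fimg β B₀ : Subgroup S) : Set S)
      rw [hEpt (le_trans hA₀ hA) a ha]
      exact mem_fimg_of (hmt₀ ha)
    · rintro f A B ⟨hA, hB, hmt, hc⟩
      have hclle : Subgroup.closure (f '' (A : Set S)) ≤ (Subgroup.normalizer (W' : Set S)) := by
        rw [Subgroup.closure_le]
        rintro _ ⟨a, ha, rfl⟩
        exact hB (hmt ha)
      refine ⟨hA, hclle,
        fun a ha => Subgroup.subset_closure (Set.mem_image_of_mem f ha), ?_⟩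
      have hcor := hNW.corestrict_mem _ _ _ hc
      rw [← hkeyc f A B ⟨hA, hB, hmt, hc⟩]
      exact hcor
    · rintro f A B ⟨hA, hB, hmt, hc⟩
      have hEf : E f A B := ⟨hA, hB, hmt, hc⟩
      have hfmul := hmulE f A B hEf
      have hclle : Subgroup.closure (f '' (A : Set S)) ≤ (Subgroup.normalizer (W' : Set S)) := by
        rw [Subgroup.closure_le]
        rintro _ ⟨a, ha, rfl⟩
        exact hB (hmt ha)
      have hfA : ((Subgroup.closure (f '' (A : Set S)) : Subgroup S) : Set S)
          = f '' (A : Set S) := fimg_coe hfmul le_rfl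
      obtain ⟨h', hh', hh'c⟩ := hNW.inv_mem _ _ _ hc
      set g := βb ∘ h' ∘ β with hgdef
      have hginv : ∀ x ∈ A, g (f x) = x := by
        intro x hx
        have e1 : β (f x) = (β ∘ f ∘ βb) (β x) := (hEpt hA x hx).symm
        show βb (h' (β (f x))) = x
        rw [e1, hh'c (β x) (mem_fimg_of hx), hβb x (hA hx)]
      refine ⟨g, ⟨hclle, hA, ?_, ?_⟩, hginv⟩
      · intro z hz
        rw [hfA] at hz
        obtain ⟨a, ha, rfl⟩ := hz
        show g (f a) ∈ (A : Set S)
        rw [hginv a ha]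
        exact ha
      · rw [← hkeyc f A B hEf]
        apply hNW.of_eqOn h' (β ∘ g ∘ βb) _ _ hh'
        intro w hw
        have hcoe2 : ((Subgroup.closure ((β ∘ f ∘ βb) ''
            ((fimg β A : Subgroup S) : Set S)) : Subgroup S) : Set S)
            = (β ∘ f ∘ βb) '' ((fimg β A : Subgroup S) : Set S) :=
          fimg_coe (hmul_of hF (nfus_to_F hF hc).1) le_rfl
        rw [hcoe2] at hw
        obtain ⟨z, hz, rfl⟩ := hw
        rw [hco hA] at hz
        obtain ⟨a, ha, rfl⟩ := hz
        have e1 : (β ∘ f ∘ βb) (β a) = β (f a) := hEpt hA a ha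
        show β (g (βb ((β ∘ f ∘ βb) (β a)))) = h' ((β ∘ f ∘ βb) (β a))
        rw [e1, hβb (f a) (hB (hmt ha))]
        show β (g (f a)) = h' (β (f a))
        rw [hginv a ha, ← e1, hh'c (β a) (mem_fimg_of ha)]
  have hsubF : ∀ g A B, E g A B → F g A B := by
    rintro g A B ⟨hA, hB, hmt, hc⟩
    have c₁ : F β A (fimg β A) := hom_fimg hF hβF hA
    have c₂ : F (β ∘ g ∘ βb) (fimg β A) (fimg β B) := (nfus_to_F hF hc).1
    have c₃ : F βb (fimg β B) B := by
      apply hF.restrict_mem βb (fimg β (Subgroup.normalizer (W' : Set S))) (Subgroup.normalizer (W' : Set S))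
        (fimg β B) B hβbiso.1 (fimg_mono hB) hB
      intro z hz
      rw [hco hB] at hz
      obtain ⟨b, hb, rfl⟩ := hz
      show βb (β b) ∈ (B : Set S)
      rw [hβb b (hB hb)]
      exact hb
    have hcomp : F (βb ∘ ((β ∘ g ∘ βb) ∘ β)) A B :=
      hF.comp_mem _ _ _ _ _ (hF.comp_mem _ _ _ _ _ c₁ c₂) c₃
    apply hF.of_eqOn _ _ _ _ hcomp
    intro a ha
    show g a = βb (β (g (βb (β a))))
    rw [hβb a (hA ha), hβb (g a) (hB (hmt ha))]
  have hphi : ∀ g A B, NPhi F W' g A B → E g A B := by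
    rintro f A B ⟨hA, hB, hiso, f₂, hf₂iso, hef, hfW'⟩
    refine ⟨hA, hB, fun a ha => hiso.2 ▸ Set.mem_image_of_mem f ha, ?_⟩
    have hAW' : A ⊔ W' ≤ (Subgroup.normalizer (W' : Set S)) := sup_le hA Subgroup.le_normalizer
    have hBW' : B ⊔ W' ≤ (Subgroup.normalizer (W' : Set S)) := sup_le hB Subgroup.le_normalizer
    have hWeq : fimg β W' = W := SetLike.coe_injective (by rw [hco Subgroup.le_normalizer, hβW])
    have hAW : fimg β (A ⊔ W') = fimg β A ⊔ W := by
      rw [fimg_sup hβmul hA Subgroup.le_normalizer, hWeq]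
    have hBW : fimg β (B ⊔ W') = fimg β B ⊔ W := by
      rw [fimg_sup hβmul hB Subgroup.le_normalizer, hWeq]
    have s1 : F βb (fimg β (A ⊔ W')) (A ⊔ W') := by
      apply hF.restrict_mem βb (fimg β (Subgroup.normalizer (W' : Set S))) (Subgroup.normalizer (W' : Set S)) _ _ hβbiso.1
        (fimg_mono hAW') hAW'
      intro z hz
      rw [hco hAW'] at hz
      obtain ⟨u, hu, rfl⟩ := hz
      show βb (β u) ∈ ((A ⊔ W' : Subgroup S) : Set S)
      rw [hβb u (hAW' hu)]
      exact hu
    have s3 : F β (B ⊔ W') (fimg β (B ⊔ W')) := hom_fimg hF hβF hBW'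
    have big : F (β ∘ (f₂ ∘ βb)) (fimg β (A ⊔ W')) (fimg β (B ⊔ W')) :=
      hF.comp_mem _ _ _ _ _ (hF.comp_mem _ _ _ _ _ s1 hf₂iso.1) s3
    have bigimg : (β ∘ (f₂ ∘ βb)) '' ((fimg β (A ⊔ W') : Subgroup S) : Set S)
        = ((fimg β (B ⊔ W') : Subgroup S) : Set S) := by
      rw [hco hAW', hco hBW', ← hf₂iso.2]
      apply Set.Subset.antisymm
      · rintro _ ⟨z, hz, rfl⟩
        obtain ⟨u, hu, rfl⟩ := hz
        show β (f₂ (βb (β u))) ∈ β '' (f₂ '' _)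
        rw [hβb u (hAW' hu)]
        exact Set.mem_image_of_mem β (Set.mem_image_of_mem f₂ hu)
      · rintro _ ⟨z, hz, rfl⟩
        obtain ⟨u, hu, rfl⟩ := hz
        refine ⟨β u, Set.mem_image_of_mem β hu, ?_⟩
        show β (f₂ (βb (β u))) = β (f₂ u)
        rw [hβb u (hAW' hu)]
    have bigiso : IsFIso F (β ∘ (f₂ ∘ βb)) (fimg β A ⊔ W) (fimg β B ⊔ W) := by
      rw [← hAW, ← hBW]
      exact ⟨big, bigimg⟩
    have bigW : (β ∘ (f₂ ∘ βb)) '' (W : Set S) = (W : Set S) := by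
      have hβbW : βb '' (W : Set S) = (W' : Set S) := by
        apply Set.Subset.antisymm
        · rintro _ ⟨w, hw, rfl⟩
          have hw' : w ∈ β '' (W' : Set S) := hβW.symm ▸ hw
          obtain ⟨u, hu, rfl⟩ := hw'
          rw [hβb u (Subgroup.le_normalizer hu)]
          exact hu
        · intro u hu
          exact ⟨β u, hβW ▸ Set.mem_image_of_mem β hu,
            hβb u (Subgroup.le_normalizer hu)⟩
      rw [Set.image_comp, Set.image_comp, hβbW, hfW', hβW]
    have bignphi : NPhi F W (β ∘ (f₂ ∘ βb)) (fimg β A ⊔ W) (fimg β B ⊔ W) := by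
      refine ⟨sup_le (hrng hA) Subgroup.le_normalizer,
        sup_le (hrng hB) Subgroup.le_normalizer, bigiso, β ∘ (f₂ ∘ βb), ?_, fun x _ => rfl, bigW⟩
      rw [sup_assoc, sup_idem, sup_assoc, sup_idem]
      exact bigiso
    have bignfus := nphi_nfus (W := W) bignphi
    have hres : NFus F W (β ∘ (f₂ ∘ βb)) (fimg β A) (fimg β B) := by
      apply hNW.restrict_mem _ _ _ (fimg β A) (fimg β B) bignfus
        (by rw [← hAW]; exact fimg_mono le_sup_left)
        (by rw [← hBW]; exact fimg_mono le_sup_left)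
      intro z hz
      rw [hco hA] at hz
      obtain ⟨a, ha, rfl⟩ := hz
      show β (f₂ (βb (β a))) ∈ ((fimg β B : Subgroup S) : Set S)
      rw [hβb a (hA ha), hef ha, hco hB]
      have hfa : f a ∈ (B : Set S) := hiso.2 ▸ Set.mem_image_of_mem f ha
      exact Set.mem_image_of_mem β hfa
    apply hNW.of_eqOn _ _ _ _ hres
    intro z hz
    rw [hco hA] at hz
    obtain ⟨a, ha, rfl⟩ := hz
    show β (f (βb (β a))) = β (f₂ (βb (β a)))
    rw [hβb a (hA ha), hef ha]
  refine ⟨βb, hβb, hβbiso, ?_⟩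
  intro f A B h
  exact (h E hE hsubF hphi).2.2.2

end CFL

section TTL

variable {S : Type*} [Group S] {F : HomPred S}
variable (hF : IsFusionSystem (⊤ : Subgroup S) F)
variable {W W' N M : Subgroup S} {τ β : S → S}

include hF

theorem normalizer_le_normalizer_of_normal
    (hM : NormalInF (Subgroup.normalizer (W : Set S)) (NFus F W) M) : (Subgroup.normalizer (W : Set S)) ≤ (Subgroup.normalizer (M : Set S)) := by
  intro x hx
  rw [Subgroup.mem_normalizer_iff]
  intro m
  constructor
  · intro hm
    have h1 := hM.2.1 x⁻¹ (inv_mem hx) m hm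
    simpa using h1
  · intro hm
    have h1 := hM.2.1 x hx _ hm
    have h2 : x⁻¹ * (x * m * x⁻¹) * x = m := by group
    rwa [h2] at h1

theorem ttl (hN : NormalInF (Subgroup.normalizer (W : Set S)) (NFus F W) N) (hWN : W ≤ N)
    (hτF : F τ (Subgroup.normalizer (W : Set S)) (Subgroup.normalizer (W' : Set S))) (hτW : τ '' (W : Set S) = (W' : Set S))
    (hβF : F β (Subgroup.normalizer (W' : Set S)) (Subgroup.normalizer (W : Set S))) (hβW : β '' (W' : Set S) = (W : Set S)) :
    NormalInF (Subgroup.normalizer (W' : Set S)) (NFus F W') (fimg τ N) := by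
  have hNnrm : N ≤ (Subgroup.normalizer (W : Set S)) := hN.1
  have hτmul := hmul_of hF hτF
  have hβmul := hmul_of hF hβF
  have he : F (β ∘ τ) (Subgroup.normalizer (W : Set S)) (Subgroup.normalizer (W : Set S)) := hF.comp_mem _ _ _ _ _ hτF hβF
  have heW : (β ∘ τ) '' (W : Set S) = (W : Set S) := by
    rw [Set.image_comp, hτW, hβW]
  have heN : (β ∘ τ) '' (N : Set S) = (N : Set S) :=
    normal_endo_fix hF hN hWN he heW
  have hτNnrm : fimg τ N ≤ (Subgroup.normalizer (W' : Set S)) := fimg_le hF hτF hNnrm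
  have hcoN : ((fimg τ N : Subgroup S) : Set S) = τ '' (N : Set S) :=
    fimg_coeF hF hτF hNnrm
  have hNrng : ∀ n ∈ (N : Set S), β (τ n) ∈ (N : Set S) := fun n hn => heN ▸ ⟨n, hn, rfl⟩
  have hWleτN : W' ≤ fimg τ N := by
    intro w' hw'
    have hw2 : w' ∈ τ '' (W : Set S) := hτW.symm ▸ hw'
    obtain ⟨w, hw, rfl⟩ := hw2
    exact mem_fimg_of (hWN hw)
  refine ⟨hτNnrm, ?_, ?_⟩
  · intro g' hg' n' hn'
    rw [← SetLike.mem_coe, hcoN] at hn'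
    obtain ⟨n, hn, rfl⟩ := hn'
    have hτn : τ n ∈ (Subgroup.normalizer (W' : Set S)) := hF.mapsTo τ _ _ hτF (hNnrm hn)
    have hh : g'⁻¹ * τ n * g' ∈ (Subgroup.normalizer (W' : Set S)) :=
      mul_mem (mul_mem (inv_mem hg') hτn) hg'
    have hβτn : β (τ n) ∈ (N : Set S) := hNrng n hn
    have hβg' : β g' ∈ (Subgroup.normalizer (W : Set S)) := hF.mapsTo β _ _ hβF hg'
    have hβh : β (g'⁻¹ * τ n * g') ∈ (N : Set S) := by
      rw [map_conj_of_mul hβmul hg' hτn]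
      exact hN.2.1 (β g') hβg' (β (τ n)) hβτn
    rw [← heN] at hβh
    obtain ⟨m, hm, hme⟩ := hβh
    have hτm : τ m ∈ (Subgroup.normalizer (W' : Set S)) := hF.mapsTo τ _ _ hτF (hNnrm hm)
    have heq2 : τ m = g'⁻¹ * τ n * g' := hF.injOn β _ _ hβF hτm hh hme
    rw [← SetLike.mem_coe, hcoN, ← heq2]
    exact Set.mem_image_of_mem τ hm
  · intro f X Y hiso
    obtain ⟨βb, hβb, hβbiso, hcfl⟩ := cfl hF hβF hβW
    have hβbF := hβbiso.1
    have hXnrm' := (nfus_to_F hF hiso.1).2.1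
    have hYnrm' := (nfus_to_F hF hiso.1).2.2
    have hconj : NFus F W (β ∘ f ∘ βb) (fimg β X) (fimg β Y) := hcfl f X Y hiso.1
    have hcoX : ((fimg β X : Subgroup S) : Set S) = β '' (X : Set S) :=
      fimg_coeF hF hβF hXnrm'
    have hcoY : ((fimg β Y : Subgroup S) : Set S) = β '' (Y : Set S) :=
      fimg_coeF hF hβF hYnrm'
    have hconjiso : IsFIso (NFus F W) (β ∘ f ∘ βb) (fimg β X) (fimg β Y) := by
      refine ⟨hconj, ?_⟩
      rw [hcoX, hcoY, ← hiso.2]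
      apply Set.Subset.antisymm
      · rintro _ ⟨z, hz, rfl⟩
        obtain ⟨x, hx, rfl⟩ := hz
        show β (f (βb (β x))) ∈ β '' (f '' (X : Set S))
        rw [hβb x (hXnrm' hx)]
        exact Set.mem_image_of_mem β (Set.mem_image_of_mem f hx)
      · rintro _ ⟨z, hz, rfl⟩
        obtain ⟨x, hx, rfl⟩ := hz
        refine ⟨β x, Set.mem_image_of_mem β hx, ?_⟩
        show β (f (βb (β x))) = β (f x)
        rw [hβb x (hXnrm' hx)]
    obtain ⟨g', hg'iso, hg'eq, hg'N⟩ := hN.2.2 _ _ _ hconjiso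
    have hFg' : F g' (fimg β X ⊔ N) (fimg β Y ⊔ N) := (nfus_to_F hF hg'iso.1).1
    have hg'W : g' '' (W : Set S) = (W : Set S) :=
      nfus_fix hF hg'iso.1 (le_trans hWN le_sup_right)
    set G := βb ∘ g' ∘ β with hGdef
    have hβbN : βb '' (N : Set S) = τ '' (N : Set S) := by
      apply Set.Subset.antisymm
      · rintro _ ⟨n, hn, rfl⟩
        have hn2 : n ∈ (β ∘ τ) '' (N : Set S) := heN.symm ▸ hn
        obtain ⟨m, hm, rfl⟩ := hn2
        show βb (β (τ m)) ∈ τ '' (N : Set S)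
        rw [hβb (τ m) (hF.mapsTo τ _ _ hτF (hNnrm hm))]
        exact Set.mem_image_of_mem τ hm
      · rintro _ ⟨m, hm, rfl⟩
        exact ⟨β (τ m), hNrng m hm, hβb (τ m) (hF.mapsTo τ _ _ hτF (hNnrm hm))⟩
    have hβτN : β '' (τ '' (N : Set S)) = (N : Set S) := by
      rw [← Set.image_comp]
      exact heN
    have hβbW : βb '' (W : Set S) = (W' : Set S) := by
      apply Set.Subset.antisymm
      · rintro _ ⟨w, hw, rfl⟩
        have hw2 : w ∈ β '' (W' : Set S) := hβW.symm ▸ hw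
        obtain ⟨u, hu, rfl⟩ := hw2
        rw [hβb u (Subgroup.le_normalizer hu)]
        exact hu
      · intro u hu
        exact ⟨β u, hβW ▸ Set.mem_image_of_mem β hu, hβb u (Subgroup.le_normalizer hu)⟩
    have hNleβ : N ≤ fimg β (Subgroup.normalizer (W' : Set S)) := by
      intro n hn
      have hn2 : n ∈ (β ∘ τ) '' (N : Set S) := heN.symm ▸ hn
      obtain ⟨m, hm, rfl⟩ := hn2
      exact mem_fimg_of (hF.mapsTo τ _ _ hτF (hNnrm hm))
    have d1 : F β (X ⊔ fimg τ N) (fimg β X ⊔ N) := by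
      apply hF.restrict_mem β (Subgroup.normalizer (W' : Set S)) (Subgroup.normalizer (W : Set S)) _ _ hβF
        (sup_le hXnrm' hτNnrm) (sup_le (fimg_le hF hβF hXnrm') hNnrm)
      apply mapsTo_sup hβmul hXnrm' hτNnrm
      · intro x hx
        exact (le_sup_left : fimg β X ≤ fimg β X ⊔ N) (mem_fimg_of hx)
      · intro z hz
        rw [hcoN] at hz
        obtain ⟨n, hn, rfl⟩ := hz
        exact (le_sup_right : N ≤ fimg β X ⊔ N) (hNrng n hn)
    have d3 : F βb (fimg β Y ⊔ N) (Y ⊔ fimg τ N) := by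
      apply hF.restrict_mem βb (fimg β (Subgroup.normalizer (W' : Set S))) (Subgroup.normalizer (W' : Set S)) _ _ hβbF
        (sup_le (fimg_mono hYnrm') hNleβ) (sup_le hYnrm' hτNnrm)
      apply mapsTo_sup (hmul_of hF hβbF) (fimg_mono hYnrm') hNleβ
      · intro z hz
        rw [hcoY] at hz
        obtain ⟨y, hy, rfl⟩ := hz
        show βb (β y) ∈ ((Y ⊔ fimg τ N : Subgroup S) : Set S)
        rw [hβb y (hYnrm' hy)]
        exact (le_sup_left : Y ≤ Y ⊔ fimg τ N) hy
      · intro n hn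
        have h1 : βb n ∈ τ '' (N : Set S) := hβbN ▸ Set.mem_image_of_mem βb hn
        have h2 : βb n ∈ fimg τ N := by
          rw [← SetLike.mem_coe, hcoN]
          exact h1
        exact (le_sup_right : fimg τ N ≤ Y ⊔ fimg τ N) h2
    have hGF : F G (X ⊔ fimg τ N) (Y ⊔ fimg τ N) :=
      hF.comp_mem _ _ _ _ _ (hF.comp_mem _ _ _ _ _ d1 hFg') d3
    have hGX : Set.EqOn G f (X : Set S) := by
      intro x hx
      have hfx : f x ∈ (Y : Set S) := hiso.2 ▸ Set.mem_image_of_mem f hx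
      show βb (g' (β x)) = f x
      have e1 : g' (β x) = (β ∘ f ∘ βb) (β x) :=
        hg'eq (mem_fimg_of hx)
      rw [e1]
      show βb (β (f (βb (β x)))) = f x
      rw [hβb x (hXnrm' hx), hβb (f x) (hYnrm' hfx)]
    have hGτN : G '' ((fimg τ N : Subgroup S) : Set S) = ((fimg τ N : Subgroup S) : Set S) := by
      rw [hcoN]
      calc G '' (τ '' (N : Set S))
          = βb '' (g' '' (β '' (τ '' (N : Set S)))) := by
            rw [hGdef, Set.image_comp, Set.image_comp]
        _ = βb '' (g' '' (N : Set S)) := by rw [hβτN]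
        _ = βb '' (N : Set S) := by rw [hg'N]
        _ = τ '' (N : Set S) := hβbN
    have hGW' : G '' (W' : Set S) = (W' : Set S) := by
      calc G '' (W' : Set S)
          = βb '' (g' '' (β '' (W' : Set S))) := by
            rw [hGdef, Set.image_comp, Set.image_comp]
        _ = βb '' (g' '' (W : Set S)) := by rw [hβW]
        _ = βb '' (W : Set S) := by rw [hg'W]
        _ = (W' : Set S) := hβbW
    have himgG : fimg G (X ⊔ fimg τ N) = Y ⊔ fimg τ N := by
      rw [fimg_sup (hmul_of hF hGF) le_sup_left le_sup_right]
      congr 1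
      · apply SetLike.coe_injective
        rw [fimg_coeF hF hGF le_sup_left, Set.image_congr hGX, hiso.2]
      · apply SetLike.coe_injective
        rw [fimg_coeF hF hGF le_sup_right, hGτN]
    have hGiso : IsFIso F G (X ⊔ fimg τ N) (Y ⊔ fimg τ N) := by
      have h2 := iso_fimg hF hGF le_rfl
      rwa [himgG] at h2
    refine ⟨G, ?_, hGX, hGτN⟩
    exact mk_nfiso hF (sup_le hXnrm' hτNnrm) (sup_le hYnrm' hτNnrm) hGiso
      (le_trans hWleτN le_sup_right) hGW'

end TTL

section Helpers

variable {S : Type*} [Group S] {F : HomPred S}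
variable (hF : IsFusionSystem (⊤ : Subgroup S) F)
variable {f : S → S} {X Y Y' : Subgroup S}

include hF

theorem hom_coenlarge (hf : F f X Y) (hYY' : Y ≤ Y') : F f X Y' := by
  have hid : F id Y Y' := by
    have h1 := hF.conj_mem 1 (Subgroup.mem_top 1) Y Y' le_top le_top
      (fun x hx => by simpa using hYY' hx)
    exact hF.of_eqOn _ id _ _ h1 (fun x _ => by simp)
  have h2 := hF.comp_mem f id X Y Y' hf hid
  exact hF.of_eqOn _ f _ _ h2 (fun x _ => rfl)

theorem dim_chain {Ω : Set (Subgroup S)} {star : Subgroup S → Subgroup S}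
    (hΩ : IsStratification ⊤ F Ω star) {ρ : S → S} {A B : Subgroup S}
    (hρF : F ρ A B) : dimStar Ω star A ≤ dimStar Ω star B :=
  le_trans (le_of_eq (dimStar_conj hΩ hF (iso_fimg hF hρF le_rfl)))
    (dimStar_mono hΩ (fimg_le hF hρF le_rfl))

end Helpers

end StratProof

open StratProof in
theorem exists_conjugate_with_socle_fullyNormalized'
    {S : Type*} [Group S] (F : HomPred S)
    (Ω : Set (Subgroup S)) (star : Subgroup S → Subgroup S)
    (hF : IsFusionSystem ⊤ F) (hΩ : IsStratification ⊤ F Ω star)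
    (Γ : Set (Subgroup S)) (hΓ : FClosed F Γ) (hind : GammaInductive ⊤ F Γ)
    (V : Subgroup S) (hV : V ∈ Γ) :
    ∃ U ∈ FConj F V, FullyNormalizedIn ⊤ F Ω star U ∧
      ∃ M : Subgroup S,
        IsGreatest {N : Subgroup S | NormalInF (Subgroup.normalizer (U : Set S)) (NFus F U) N} M ∧
        FullyNormalizedIn ⊤ F Ω star M := by
  classical
  obtain ⟨Y, hYconj, hYind⟩ := hind V hV
  obtain ⟨Ms, hMsGreat⟩ := soc_exists hΩ hF (W := Y)
  have hMs : NormalInF (Subgroup.normalizer (Y : Set S)) (NFus F Y) Ms := hMsGreat.1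
  have hYMs : Y ≤ Ms := hMsGreat.2 (triv_normal hF)
  have hNle : (Subgroup.normalizer (Y : Set S)) ≤ (Subgroup.normalizer (Ms : Set S)) := normalizer_le_normalizer_of_normal hF hMs
  have hYleMsN : Y ≤ (Subgroup.normalizer (Ms : Set S)) := le_trans hYMs Subgroup.le_normalizer
  -- Ms ∈ Γ
  have hYΓ : Y ∈ Γ := hΓ.2.1 V hV Y hYconj
  have hMsΓ : Ms ∈ Γ := hΓ.2.2 Y hYΓ Ms hYMs
  -- inductive representative of the class of Ms
  obtain ⟨P, hPconj, hPind⟩ := hind Ms hMsΓ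
  have hMsP : Ms ∈ FConj F P := fconj_symm hF hPconj
  obtain ⟨φ, hφF, hφMs⟩ := hPind Ms hMsP
  rw [inf_top_eq, inf_top_eq] at hφF
  -- the transported conjugate U' of V
  set U' := fimg φ Y with hU'def
  have hφrY : F φ (Subgroup.normalizer (Y : Set S)) (Subgroup.normalizer (P : Set S)) := hom_restrict hF hφF hNle
  have hfimgle : fimg φ (Subgroup.normalizer (Y : Set S)) ≤ (Subgroup.normalizer (U' : Set S)) := by
    rw [fimg_le_iff]
    intro x hx
    exact normalizer_transport hF hφF hYleMsN (hNle hx) hx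
  have hτF : F φ (Subgroup.normalizer (Y : Set S)) (Subgroup.normalizer (U' : Set S)) :=
    hom_coenlarge hF (hom_fimg hF hφrY le_rfl) hfimgle
  have hτW : φ '' (Y : Set S) = (U' : Set S) := (fimg_coeF hF hφF hYleMsN).symm
  have hYU' : U' ∈ FConj F Y := ⟨φ, iso_fimg hF hφF hYleMsN⟩
  have hU'conj : U' ∈ FConj F V := fconj_trans hF hYconj hYU'
  -- receiving map from Y-inductivity
  obtain ⟨β, hβF, hβW⟩ := hYind U' hYU'
  rw [inf_top_eq, inf_top_eq] at hβF
  -- P is normal in N_F(U')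
  have hMsnrmY : Ms ≤ (Subgroup.normalizer (Y : Set S)) := hMs.1
  have hPnormal0 : NormalInF (Subgroup.normalizer (U' : Set S)) (NFus F U') (fimg φ Ms) :=
    ttl hF hMs hYMs hτF hτW hβF hβW
  have hfimgMs : fimg φ Ms = P :=
    SetLike.coe_injective (by rw [fimg_coeF hF hφF Subgroup.le_normalizer, hφMs])
  rw [hfimgMs] at hPnormal0
  -- P is the greatest normal subgroup of N_F(U')
  have hPgreat : IsGreatest {N : Subgroup S | NormalInF (Subgroup.normalizer (U' : Set S)) (NFus F U') N} P := by
    refine ⟨hPnormal0, ?_⟩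
    intro N' hN'
    have hN'' : NormalInF (Subgroup.normalizer (U' : Set S)) (NFus F U') (N' ⊔ U') :=
      normal_join hF hN' (triv_normal hF)
    have hU'leN'' : U' ≤ N' ⊔ U' := le_sup_right
    have hback : NormalInF (Subgroup.normalizer (Y : Set S)) (NFus F Y) (fimg β (N' ⊔ U')) :=
      ttl hF hN'' hU'leN'' hβF hβW hτF hτW
    have hle : fimg β (N' ⊔ U') ≤ Ms := hMsGreat.2 hback
    have he' : F (φ ∘ β) (Subgroup.normalizer (U' : Set S)) (Subgroup.normalizer (U' : Set S)) :=
      hF.comp_mem β φ _ _ _ hβF hτF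
    have he'W : (φ ∘ β) '' (U' : Set S) = (U' : Set S) := by
      rw [Set.image_comp, hβW, hτW]
    have he'N : (φ ∘ β) '' ((N' ⊔ U' : Subgroup S) : Set S)
        = ((N' ⊔ U' : Subgroup S) : Set S) :=
      normal_endo_fix hF hN'' hU'leN'' he' he'W
    intro n' hn'
    have hn'2 : n' ∈ ((N' ⊔ U' : Subgroup S) : Set S) := (le_sup_left : N' ≤ N' ⊔ U') hn'
    rw [← he'N] at hn'2
    obtain ⟨m, hm, hme⟩ := hn'2
    have hβm : β m ∈ Ms := hle (mem_fimg_of hm)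
    have : n' ∈ (P : Set S) := hφMs ▸ ⟨β m, hβm, hme⟩
    exact this
  -- U' is fully normalized
  have hUfn : FullyNormalizedIn ⊤ F Ω star U' := by
    intro X hXU'
    rw [inf_top_eq, inf_top_eq]
    have hXY : X ∈ FConj F Y := fconj_trans hF hYU' hXU'
    obtain ⟨ρ, hρF, _⟩ := hYind X hXY
    rw [inf_top_eq, inf_top_eq] at hρF
    exact le_trans (dim_chain hF hΩ hρF) (dim_chain hF hΩ hτF)
  -- P is fully normalized
  have hPfn : FullyNormalizedIn ⊤ F Ω star P := by
    intro Q hQP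
    rw [inf_top_eq, inf_top_eq]
    obtain ⟨σ, hσF, _⟩ := hPind Q hQP
    rw [inf_top_eq, inf_top_eq] at hσF
    exact dim_chain hF hΩ hσF
  exact ⟨U', hU'conj, hUfn, P, hPgreat, hPfn⟩
/-- Lemma 2.13. For `V ∈ Γ` there exists an `F`-conjugate `U` of `V`
such that both `U` and `Soc(N_F(U))`—the largest subgroup of `N_S(U)` that is normal in
`N_F(U)`—are fully normalized in `F`. -/
theorem exists_conjugate_with_socle_fullyNormalized
    {S : Type*} [Group S] (F : HomPred S)
    (Ω : Set (Subgroup S)) (star : Subgroup S → Subgroup S)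
    (hF : IsFusionSystem ⊤ F) (hΩ : IsStratification ⊤ F Ω star)
    (Γ : Set (Subgroup S)) (hΓ : FClosed F Γ) (hind : GammaInductive ⊤ F Γ)
    (V : Subgroup S) (hV : V ∈ Γ) :
    ∃ U ∈ FConj F V, FullyNormalizedIn ⊤ F Ω star U ∧
      ∃ M : Subgroup S,
        IsGreatest {N : Subgroup S | NormalInF (Subgroup.normalizer (U : Set S)) (NFus F U) N} M ∧
        FullyNormalizedIn ⊤ F Ω star M := by
  exact exists_conjugate_with_socle_fullyNormalized' F Ω star hF hΩ Γ hΓ hind V hV
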